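/- arXiv:1801.09085 — 9 statements merged into one kernel-verified Lean document; each statement's English description precedes it below -/
import Mathlib

section
/- Let V be a real vector space whose dimension is countable (i.e., Module.rank ℝ V ≤ ℵ₀). Then a subset O of V is finite open if and only if O is norm-openable, i.e., there exists a norm N on V such that O is open in the topology induced by N. -/
open Metric Set Function

/-- `N` is a norm on the real vector space `V`. -/
def IsNorm {V : Type*} [AddCommGroup V] [Module ℝ V] (N : V → ℝ) : Prop :=
  (∀ x, 0 ≤ N x) ∧ (∀ x, N x = 0 ↔ x = 0) ∧
    (∀ (a : ℝ) (x : V), N (a • x) = |a| * N x) ∧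
    ∀ x y, N (x + y) ≤ N x + N y

/-- `O` is open for the metric topology induced by the norm `N`. -/
def NormOpen {V : Type*} [AddCommGroup V] (N : V → ℝ) (O : Set V) : Prop :=
  ∀ x ∈ O, ∃ ε > 0, ∀ y, N (y - x) < ε → y ∈ O

/-- `O` is finite open: its trace on every finite-dimensional subspace is open for the
canonical topology of that subspace (expressed via linear maps from `ℝⁿ`). -/
def FiniteOpen {V : Type*} [AddCommGroup V] [Module ℝ V] (O : Set V) : Prop :=
  ∀ (n : ℕ) (φ : (Fin n → ℝ) →ₗ[ℝ] V), IsOpen (φ ⁻¹' O)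


noncomputable def iotaF (m : ℕ) : (Fin m → ℝ) →ₗ[ℝ] (ℕ →₀ ℝ) :=
  (Finsupp.lmapDomain ℝ ℝ (Fin.val : Fin m → ℕ)).comp
    (Finsupp.linearEquivFunOnFinite ℝ ℝ (Fin m)).symm.toLinearMap

lemma iotaF_apply {m : ℕ} (f : Fin m → ℝ) (k : ℕ) :
    iotaF m f k = if h : k < m then f ⟨k, h⟩ else 0 := by
  have h0 : iotaF m f = Finsupp.mapDomain Fin.val (Finsupp.equivFunOnFinite.symm f) := rfl
  rw [h0]
  split_ifs with h
  · have := Finsupp.mapDomain_apply (Fin.val_injective) (Finsupp.equivFunOnFinite.symm f) ⟨k, h⟩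
    simpa using this
  · rw [Finsupp.mapDomain_notin_range]
    rintro ⟨i, rfl⟩
    exact h i.isLt

def padF {n m : ℕ} (a : Fin n → ℝ) : Fin m → ℝ :=
  fun i => if h : (i : ℕ) < n then a ⟨i, h⟩ else 0

lemma iotaF_padF {n m : ℕ} (h : n ≤ m) (a : Fin n → ℝ) :
    iotaF m (padF a) = iotaF n a := by
  ext k
  rw [iotaF_apply, iotaF_apply]
  rcases lt_or_ge k m with hk | hk
  · rw [dif_pos hk]
    show (if h' : k < n then a ⟨k, h'⟩ else 0) = _
    split_ifs with h' <;> rfl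
  · rw [dif_neg (by omega), dif_neg (by omega)]

lemma iotaF_coords (x : ℕ →₀ ℝ) (m : ℕ) (h : ∀ k ∈ x.support, k < m) :
    iotaF m (fun i => x i) = x := by
  ext k
  rw [iotaF_apply]
  split_ifs with hk
  · rfl
  · symm
    rw [← Finsupp.notMem_support_iff]
    intro hm
    exact hk (h k hm)

lemma continuous_padF {n m : ℕ} : Continuous (padF (n := n) (m := m)) := by
  apply continuous_pi
  intro i
  unfold padF
  split_ifs with h
  · exact continuous_apply _
  · exact continuous_const

abbrev TT := (n : ℕ) × ((Fin n → ℚ) × ℚ)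

section Main

variable (O : Set (ℕ →₀ ℝ)) (enc : TT → ℕ)

def Uo (n : ℕ) : Set (Fin n → ℝ) := (iotaF n) ⁻¹' O

def qpt (t : TT) : Fin t.1 → ℝ := fun i => (t.2.1 i : ℝ)

def Kt (t : TT) : Set (Fin t.1 → ℝ) := closedBall (qpt t) (t.2.2 : ℝ)

def Goodt (t : TT) : Prop := Kt t ⊆ Uo O t.1

def mT (t : TT) : ℕ := max t.1 (enc t) + 1

lemma Kt_compact (t : TT) : IsCompact (Kt t) := isCompact_closedBall _ _

lemma mem_Uo_pad {n m : ℕ} (h : n ≤ m) {a : Fin n → ℝ} (ha : a ∈ Uo O n) :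
    (padF a : Fin m → ℝ) ∈ Uo O m := by
  show iotaF m (padF a) ∈ O
  rw [iotaF_padF h]
  exact ha

lemma exists_del (hO : FiniteOpen O) (t : TT) (hg : Goodt O t) :
    ∃ d : ℝ, 0 < d ∧
      cthickening d ((padF '' Kt t) : Set (Fin (mT enc t) → ℝ)) ⊆ Uo O (mT enc t) := by
  have hkc : IsCompact ((padF '' Kt t) : Set (Fin (mT enc t) → ℝ)) :=
    (Kt_compact t).image continuous_padF
  have hsub : ((padF '' Kt t) : Set (Fin (mT enc t) → ℝ)) ⊆ Uo O (mT enc t) := by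
    rintro _ ⟨a, ha, rfl⟩
    exact mem_Uo_pad O (by simp [mT]; omega) (hg ha)
  exact hkc.exists_cthickening_subset_open (hO _ (iotaF _)) hsub

open scoped Classical in
noncomputable def del (t : TT) : ℝ :=
  if h : ∃ d : ℝ, 0 < d ∧
      cthickening d ((padF '' Kt t) : Set (Fin (mT enc t) → ℝ)) ⊆ Uo O (mT enc t)
  then h.choose else 1

lemma del_pos (t : TT) : 0 < del O enc t := by
  unfold del
  split_ifs with h
  · exact h.choose_spec.1
  · norm_num

lemma del_spec (hO : FiniteOpen O) (t : TT) (hg : Goodt O t) :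
    cthickening (del O enc t) ((padF '' Kt t) : Set (Fin (mT enc t) → ℝ)) ⊆ Uo O (mT enc t) := by
  have h := exists_del O enc hO t hg
  unfold del
  rw [dif_pos h]
  exact h.choose_spec.2

noncomputable def Sm (c : ℕ → ℝ) {m : ℕ} (v : Fin m → ℝ) : ℝ := ∑ i : Fin m, c i * |v i|

lemma Sm_nonneg {c : ℕ → ℝ} (hc : ∀ k, 1 ≤ c k) {m : ℕ} (v : Fin m → ℝ) : 0 ≤ Sm c v :=
  Finset.sum_nonneg fun i _ => mul_nonneg (le_trans zero_le_one (hc i)) (abs_nonneg _)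

lemma coord_le_Sm {c : ℕ → ℝ} (hc : ∀ k, 1 ≤ c k) {m : ℕ} (v : Fin m → ℝ) (i : Fin m) :
    |v i| ≤ Sm c v := by
  calc |v i| ≤ c i * |v i| := le_mul_of_one_le_left (abs_nonneg _) (hc i)
    _ ≤ Sm c v := Finset.single_le_sum (f := fun j : Fin m => c j * |v j|)
        (fun j _ => mul_nonneg (le_trans zero_le_one (hc j)) (abs_nonneg _))
        (Finset.mem_univ i)

lemma term_le_Sm {c : ℕ → ℝ} (hc : ∀ k, 1 ≤ c k) {m : ℕ} (v : Fin m → ℝ) (i : Fin m) :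
    c i * |v i| ≤ Sm c v :=
  Finset.single_le_sum (f := fun j : Fin m => c j * |v j|)
    (fun j _ => mul_nonneg (le_trans zero_le_one (hc j)) (abs_nonneg _)) (Finset.mem_univ i)

lemma continuous_Sm (c : ℕ → ℝ) (m : ℕ) : Continuous (Sm c (m := m)) := by
  apply continuous_finset_sum
  intro i _
  exact continuous_const.mul ((continuous_apply i).abs)

def Cset (t : TT) (m : ℕ) (c : ℕ → ℝ) : Set (Fin m → ℝ) :=
  {z | ∃ a ∈ Kt t, Sm c (z - padF a) ≤ del O enc t}

def Invc (m : ℕ) (c : ℕ → ℝ) : Prop :=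
  ∀ t : TT, Goodt O t → mT enc t ≤ m → Cset O enc t m c ⊆ Uo O m

lemma Cset_congr {t : TT} {m : ℕ} {c c' : ℕ → ℝ} (h : ∀ k < m, c' k = c k) :
    Cset O enc t m c' = Cset O enc t m c := by
  unfold Cset
  ext z
  have : ∀ v : Fin m → ℝ, Sm c' v = Sm c v := by
    intro v
    exact Finset.sum_congr rfl fun i _ => by rw [h i i.isLt]
  simp only [this]

lemma entry (hO : FiniteOpen O) (t : TT) (hg : Goodt O t) (c : ℕ → ℝ) (hc : ∀ k, 1 ≤ c k) :
    Cset O enc t (mT enc t) c ⊆ Uo O (mT enc t) := by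
  rintro z ⟨a, ha, hs⟩
  apply del_spec O enc hO t hg
  apply Metric.mem_cthickening_of_dist_le z (padF a) _ _ (mem_image_of_mem _ ha)
  rw [dist_pi_le_iff (del_pos O enc t).le]
  intro i
  rw [Real.dist_eq]
  calc |z i - padF a i| = |(z - (padF a : Fin (mT enc t) → ℝ)) i| := rfl
    _ ≤ Sm c (z - (padF a : Fin (mT enc t) → ℝ)) := coord_le_Sm hc _ i
    _ ≤ del O enc t := hs

lemma Cset_compact (t : TT) (m : ℕ) (c : ℕ → ℝ) (hc : ∀ k, 1 ≤ c k) :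
    IsCompact (Cset O enc t m c) := by
  have heq : Cset O enc t m c =
      (fun p : (Fin t.1 → ℝ) × (Fin m → ℝ) => padF p.1 + p.2) ''
        (Kt t ×ˢ {u : Fin m → ℝ | Sm c u ≤ del O enc t}) := by
    ext z
    constructor
    · rintro ⟨a, ha, hs⟩
      exact ⟨⟨a, z - (padF a : Fin m → ℝ)⟩, ⟨ha, hs⟩, by simp⟩
    · rintro ⟨⟨a, u⟩, ⟨ha, hu⟩, rfl⟩
      refine ⟨a, ha, ?_⟩
      simpa using hu
  rw [heq]
  have hball : IsCompact {u : Fin m → ℝ | Sm c u ≤ del O enc t} := by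
    apply (isCompact_closedBall (0 : Fin m → ℝ) (del O enc t)).of_isClosed_subset
    · exact isClosed_le (continuous_Sm c m) continuous_const
    · intro u hu
      rw [mem_closedBall, dist_pi_le_iff (del_pos O enc t).le]
      intro i
      rw [Real.dist_eq]
      simpa using le_trans (coord_le_Sm hc u i) hu
  exact ((Kt_compact t).prod hball).image
    ((continuous_padF.comp continuous_fst).add continuous_snd)

lemma step_t (hO : FiniteOpen O) (m : ℕ) (c : ℕ → ℝ) (hc : ∀ k, 1 ≤ c k) (t : TT) :
    ∃ Cb : ℝ, (Goodt O t ∧ mT enc t ≤ m ∧ Cset O enc t m c ⊆ Uo O m) →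
      ∀ c' : ℕ → ℝ, (∀ k < m, c' k = c k) → Cb ≤ c' m →
        Cset O enc t (m + 1) c' ⊆ Uo O (m + 1) := by
  by_cases H : Goodt O t ∧ mT enc t ≤ m ∧ Cset O enc t m c ⊆ Uo O m
  swap
  · exact ⟨0, fun hh => absurd hh H⟩
  obtain ⟨hg, hm, hsub⟩ := H
  have hnm : t.1 < m := by unfold mT at hm; omega
  have hPc : IsCompact ((padF '' Cset O enc t m c : Set (Fin (m + 1) → ℝ))) :=
    (Cset_compact O enc t m c hc).image continuous_padF
  have hPsub : ((padF '' Cset O enc t m c : Set (Fin (m + 1) → ℝ))) ⊆ Uo O (m + 1) := by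
    rintro _ ⟨w, hw, rfl⟩
    exact mem_Uo_pad O (Nat.le_succ m) (hsub hw)
  obtain ⟨ρ, hρ, hρ2⟩ := hPc.exists_cthickening_subset_open (hO _ (iotaF _)) hPsub
  refine ⟨del O enc t / ρ, fun _ => ?_⟩
  intro c' hagree hCb
  have hcm : 0 < c' m := lt_of_lt_of_le (div_pos (del_pos O enc t) hρ) hCb
  have hc'nn : ∀ k : Fin (m + 1), 0 ≤ c' k := by
    intro k
    rcases lt_or_ge (k : ℕ) m with h | h
    · rw [hagree k h]; linarith [hc (k : ℕ)]
    · have hk : (k : ℕ) = m := by omega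
      rw [hk]; exact hcm.le
  rintro z ⟨a, ha, hs⟩
  set w : Fin m → ℝ := fun i => z i.castSucc with hw
  have hpadc : ∀ i : Fin m, (padF a : Fin m → ℝ) i = (padF a : Fin (m + 1) → ℝ) i.castSucc := by
    intro i
    simp [padF]
  have hwC : w ∈ Cset O enc t m c := by
    refine ⟨a, ha, ?_⟩
    have hterm : ∀ i : Fin m,
        c i * |(w - (padF a : Fin m → ℝ)) i| = c' (i.castSucc : Fin (m+1)) * |(z - (padF a : Fin (m+1) → ℝ)) i.castSucc| := by
      intro i
      have h1 : ((i.castSucc : Fin (m + 1)) : ℕ) = (i : ℕ) := rfl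
      rw [h1, ← hagree i i.isLt]
      simp only [Pi.sub_apply, hw]
      rw [hpadc i]
    calc Sm c (w - (padF a : Fin m → ℝ)) = ∑ i : Fin m, c' (i.castSucc : Fin (m+1)) * |(z - (padF a : Fin (m+1) → ℝ)) i.castSucc| :=
          Finset.sum_congr rfl fun i _ => hterm i
      _ ≤ Sm c' (z - (padF a : Fin (m+1) → ℝ)) := by
          rw [Sm, Fin.sum_univ_castSucc (f := fun j : Fin (m + 1) => c' j * |(z - (padF a : Fin (m+1) → ℝ)) j|)]
          have h2 : 0 ≤ c' ((Fin.last m : Fin (m+1)) : ℕ) * |(z - (padF a : Fin (m+1) → ℝ)) (Fin.last m)| :=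
            mul_nonneg (hc'nn _) (abs_nonneg _)
          linarith
      _ ≤ del O enc t := hs
  have hlastpad : (padF a : Fin (m + 1) → ℝ) (Fin.last m) = 0 := by
    rw [padF]
    rw [dif_neg]
    rw [Fin.val_last]
    omega
  have hlast : |z (Fin.last m)| ≤ ρ := by
    have h3 : c' ((Fin.last m : Fin (m+1)) : ℕ) * |(z - (padF a : Fin (m+1) → ℝ)) (Fin.last m)| ≤ Sm c' (z - (padF a : Fin (m+1) → ℝ)) :=
      Finset.single_le_sum (f := fun j : Fin (m + 1) => c' j * |(z - (padF a : Fin (m+1) → ℝ)) j|)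
        (fun j _ => mul_nonneg (hc'nn j) (abs_nonneg _)) (Finset.mem_univ _)
    have h4 : c' m * |z (Fin.last m)| ≤ del O enc t := by
      have hv : ((Fin.last m : Fin (m+1)) : ℕ) = m := Fin.val_last m
      rw [hv] at h3
      have : (z - (padF a : Fin (m+1) → ℝ)) (Fin.last m) = z (Fin.last m) := by
        simp [hlastpad]
      rw [this] at h3
      exact le_trans h3 hs
    have h5 : del O enc t ≤ c' m * ρ := (div_le_iff₀ hρ).mp hCb
    have := le_trans h4 h5
    exact le_of_mul_le_mul_left this hcm
  have hdist : dist z (padF w : Fin (m + 1) → ℝ) ≤ ρ := by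
    rw [dist_pi_le_iff hρ.le]
    intro i
    rw [Real.dist_eq]
    refine Fin.lastCases ?_ ?_ i
    · have : (padF w : Fin (m + 1) → ℝ) (Fin.last m) = 0 := by
        rw [padF, dif_neg]
        rw [Fin.val_last]
        omega
      rw [this, sub_zero]
      exact hlast
    · intro j
      have : (padF w : Fin (m + 1) → ℝ) j.castSucc = z j.castSucc := by
        have hj : ((j.castSucc : Fin (m + 1)) : ℕ) < m := j.isLt
        show dite _ _ _ = _
        rw [dif_pos hj]
        simp [hw]
      rw [this]
      simpa using hρ.le
  exact hρ2 (Metric.mem_cthickening_of_dist_le z (padF w) _ _ (mem_image_of_mem _ hwC) hdist)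

lemma encode_lt_mT (t : TT) : enc t < mT enc t := by unfold mT; omega

lemma exists_step (hO : FiniteOpen O) (henc : Function.Injective enc) (m : ℕ) (c : ℕ → ℝ)
    (hc : ∀ k, 1 ≤ c k) (hinv : Invc O enc m c) :
    ∃ v : ℝ, 1 ≤ v ∧ ∀ c' : ℕ → ℝ, (∀ k < m, c' k = c k) → c' m = v →
      (∀ k, 1 ≤ c' k) → Invc O enc (m + 1) c' := by
  choose Cb hCb using step_t O enc hO m c hc
  have hfin : {t : TT | mT enc t ≤ m}.Finite := by
    apply Set.Finite.subset (Set.Finite.preimage henc.injOn (Set.finite_Iio m))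
    intro t ht
    exact lt_of_lt_of_le (encode_lt_mT enc t) ht
  obtain ⟨B, hB⟩ := (hfin.image Cb).bddAbove
  refine ⟨max 1 B, le_max_left _ _, ?_⟩
  intro c' hagree hcm hc1 t hg hle
  rcases eq_or_lt_of_le hle with heq | hlt
  · have h2 := entry O enc hO t hg c' hc1
    rw [heq] at h2
    exact h2
  · have hm2 : mT enc t ≤ m := Nat.lt_succ_iff.mp hlt
    apply hCb t ⟨hg, hm2, hinv t hg hm2⟩ c' hagree
    rw [hcm]
    calc Cb t ≤ B := hB (Set.mem_image_of_mem Cb hm2)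
      _ ≤ max 1 B := le_max_right _ _

lemma Invc_zero (c : ℕ → ℝ) : Invc O enc 0 c := by
  intro t _ hle
  exfalso
  unfold mT at hle
  omega

noncomputable def stateSeq (hO : FiniteOpen O) (henc : Function.Injective enc) :
    (m : ℕ) → {c : ℕ → ℝ // (∀ k, 1 ≤ c k) ∧ Invc O enc m c}
  | 0 => ⟨fun _ => 1, fun _ => le_refl 1, Invc_zero O enc _⟩
  | (m + 1) =>
    ⟨fun k => if k = m then
        (exists_step O enc hO henc m (stateSeq hO henc m).1 (stateSeq hO henc m).2.1
          (stateSeq hO henc m).2.2).choose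
      else (stateSeq hO henc m).1 k, by
      have h := (exists_step O enc hO henc m (stateSeq hO henc m).1 (stateSeq hO henc m).2.1
          (stateSeq hO henc m).2.2).choose_spec
      have hge : ∀ k : ℕ, 1 ≤ (fun k => if k = m then
          (exists_step O enc hO henc m (stateSeq hO henc m).1 (stateSeq hO henc m).2.1
            (stateSeq hO henc m).2.2).choose
        else (stateSeq hO henc m).1 k) k := by
        intro k
        dsimp only
        split_ifs with hk
        · exact h.1
        · exact (stateSeq hO henc m).2.1 k
      refine ⟨hge, ?_⟩
      apply h.2
      · intro k hk
        exact if_neg (by omega)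
      · exact if_pos rfl
      · exact hge⟩

lemma stateSeq_succ_apply (hO : FiniteOpen O) (henc : Function.Injective enc) (m k : ℕ) :
    (stateSeq O enc hO henc (m + 1)).1 k = if k = m then
        (exists_step O enc hO henc m (stateSeq O enc hO henc m).1 (stateSeq O enc hO henc m).2.1
          (stateSeq O enc hO henc m).2.2).choose
      else (stateSeq O enc hO henc m).1 k := rfl

noncomputable def cfin (hO : FiniteOpen O) (henc : Function.Injective enc) : ℕ → ℝ :=
  fun k => (stateSeq O enc hO henc (k + 1)).1 k

lemma stateSeq_agree (hO : FiniteOpen O) (henc : Function.Injective enc) :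
    ∀ m k, k < m → (stateSeq O enc hO henc m).1 k = cfin O enc hO henc k := by
  intro m
  induction m with
  | zero => intro k hk; omega
  | succ m ih =>
    intro k hk
    rw [stateSeq_succ_apply]
    by_cases hkm : k = m
    · subst hkm
      rw [if_pos rfl]
      show _ = (stateSeq O enc hO henc (k + 1)).1 k
      rw [stateSeq_succ_apply, if_pos rfl]
    · rw [if_neg hkm]
      exact ih k (by omega)

lemma cfin_ge1 (hO : FiniteOpen O) (henc : Function.Injective enc) (k : ℕ) :
    1 ≤ cfin O enc hO henc k := (stateSeq O enc hO henc (k + 1)).2.1 k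

lemma cfin_inv (hO : FiniteOpen O) (henc : Function.Injective enc) (m : ℕ) :
    Invc O enc m (cfin O enc hO henc) := by
  intro t hg hle
  rw [Cset_congr O enc (c := (stateSeq O enc hO henc m).1) (c' := cfin O enc hO henc)
    (fun k hk => (stateSeq_agree O enc hO henc m k hk).symm)]
  exact (stateSeq O enc hO henc m).2.2 t hg hle

end Main

noncomputable def NN (c : ℕ → ℝ) (x : ℕ →₀ ℝ) : ℝ := x.sum fun k v => c k * |v|

lemma NN_eq (c : ℕ → ℝ) (x : ℕ →₀ ℝ) {s : Finset ℕ} (h : x.support ⊆ s) :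
    NN c x = ∑ k ∈ s, c k * |x k| :=
  Finsupp.sum_of_support_subset x h _ (fun i _ => by simp)

lemma isNorm_NN (c : ℕ → ℝ) (hc : ∀ k, 1 ≤ c k) : IsNorm (NN c) := by
  classical
  have hnn : ∀ x : ℕ →₀ ℝ, 0 ≤ NN c x := by
    intro x
    rw [NN_eq c x (subset_refl _)]
    exact Finset.sum_nonneg fun k _ => mul_nonneg (by linarith [hc k]) (abs_nonneg _)
  refine ⟨hnn, ?_, ?_, ?_⟩
  · intro x
    constructor
    · intro hx
      have h0 : ∀ k ∈ x.support, c k * |x k| = 0 := by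
        rw [NN_eq c x (subset_refl _)] at hx
        exact (Finset.sum_eq_zero_iff_of_nonneg
          (fun k _ => mul_nonneg (by linarith [hc k]) (abs_nonneg _))).mp hx
      ext k
      by_cases hk : k ∈ x.support
      · have h1 := h0 k hk
        have hck : (0:ℝ) < c k := by linarith [hc k]
        have h2 : |x k| = 0 := by
          rcases mul_eq_zero.mp h1 with h | h
          · linarith
          · exact h
        simpa using abs_eq_zero.mp h2
      · simpa using Finsupp.notMem_support_iff.mp hk
    · rintro rfl
      simp [NN]
  · intro a x
    have hsub : (a • x).support ⊆ x.support := Finsupp.support_smul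
    rw [NN_eq c (a • x) hsub, NN_eq c x (subset_refl _), Finset.mul_sum]
    refine Finset.sum_congr rfl fun k _ => ?_
    have h3 : (a • x) k = a * x k := rfl
    rw [h3, abs_mul]
    ring
  · intro x y
    have hsub : (x + y).support ⊆ x.support ∪ y.support := Finsupp.support_add
    rw [NN_eq c (x + y) hsub, NN_eq c x Finset.subset_union_left,
      NN_eq c y Finset.subset_union_right, ← Finset.sum_add_distrib]
    refine Finset.sum_le_sum fun k _ => ?_
    have h4 : (x + y) k = x k + y k := rfl
    rw [h4, ← mul_add]
    exact mul_le_mul_of_nonneg_left (abs_add_le (x k) (y k)) (by linarith [hc k])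

theorem finsuppCase (O : Set (ℕ →₀ ℝ)) (hO : FiniteOpen O) :
    ∃ N : (ℕ →₀ ℝ) → ℝ, IsNorm N ∧ NormOpen N O := by
  obtain ⟨enc, henc⟩ := Countable.exists_injective_nat TT
  set c := cfin O enc hO henc with hcdef
  have hc : ∀ k, 1 ≤ c k := cfin_ge1 O enc hO henc
  refine ⟨NN c, isNorm_NN c hc, ?_⟩
  intro x hx
  obtain ⟨n, hn⟩ := x.support.exists_nat_subset_range
  set a : Fin n → ℝ := fun i => x i with ha
  have hxa : iotaF n a = x := iotaF_coords x n (fun k hk => Finset.mem_range.mp (hn hk))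
  have haU : a ∈ Uo O n := by
    show iotaF n a ∈ O
    rw [hxa]; exact hx
  obtain ⟨ρ, hρ, hball⟩ := Metric.isOpen_iff.mp (hO n (iotaF n)) a haU
  have hρ4 : (0:ℝ) < ρ/4 := by linarith
  choose q hq using fun i : Fin n => exists_rat_near (x i) hρ4
  obtain ⟨r, hr1, hr2⟩ := exists_rat_btwn (show (ρ/4 : ℝ) < ρ/2 by linarith)
  set t : TT := ⟨n, (q, r)⟩ with ht
  have hqa : dist a (qpt t) ≤ ρ/4 := by
    rw [dist_pi_le_iff hρ4.le]
    intro i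
    rw [Real.dist_eq]
    show |x (i:ℕ) - ((q i : ℚ) : ℝ)| ≤ ρ/4
    exact (hq i).le
  have hxK : a ∈ Kt t := by
    rw [Kt, mem_closedBall]
    show dist a (qpt t) ≤ ((r : ℚ) : ℝ)
    exact le_trans hqa (by linarith)
  have hgood : Goodt O t := by
    intro zz hz
    apply hball
    rw [mem_ball]
    have h1 : dist zz a ≤ dist zz (qpt t) + dist (qpt t) a := dist_triangle _ _ _
    have h2 : dist zz (qpt t) ≤ ((r : ℚ) : ℝ) := mem_closedBall.mp hz
    have h3 : dist (qpt t) a ≤ ρ/4 := by rw [dist_comm]; exact hqa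
    calc dist zz a ≤ ((r : ℚ) : ℝ) + ρ/4 := by linarith
      _ < ρ := by linarith
  refine ⟨del O enc t, del_pos O enc t, ?_⟩
  intro y hy
  obtain ⟨m₀, hm₀⟩ := (y - x).support.exists_nat_subset_range
  obtain ⟨m₁, hm₁⟩ := y.support.exists_nat_subset_range
  set m := max (mT enc t) (max m₀ (max m₁ n)) with hm
  have hmT : mT enc t ≤ m := le_max_left _ _
  have hnm : n ≤ m := by omega
  set z : Fin m → ℝ := fun i => y i with hzdef
  have hzy : iotaF m z = y := iotaF_coords y m (fun k hk => by
    have := Finset.mem_range.mp (hm₁ hk); omega)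
  have hmemU : z ∈ Uo O m → y ∈ O := by
    intro h
    have h5 : iotaF m z ∈ O := h
    rwa [hzy] at h5
  apply hmemU
  apply cfin_inv O enc hO henc m t hgood hmT
  refine ⟨a, hxK, ?_⟩
  have hcoord : ∀ i : Fin m, (z - (padF a : Fin m → ℝ)) i = (y - x) i := by
    intro i
    show z i - padF a i = (y - x) i
    rw [Finsupp.sub_apply]
    by_cases hi : (i:ℕ) < n
    · show y i - dite _ _ _ = _
      rw [dif_pos hi]
    · show y i - dite _ _ _ = _
      rw [dif_neg hi]
      have hxi : x (i:ℕ) = 0 := by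
        by_contra hne
        have h6 : (i:ℕ) ∈ x.support := Finsupp.mem_support_iff.mpr hne
        have h7 := Finset.mem_range.mp (hn h6)
        omega
      rw [hxi]
  have hSm : Sm c (z - (padF a : Fin m → ℝ)) = NN c (y - x) := by
    rw [NN_eq c (y - x) (s := Finset.range m) (fun k hk => by
      have := Finset.mem_range.mp (hm₀ hk)
      exact Finset.mem_range.mpr (by omega))]
    rw [Sm, ← Fin.sum_univ_eq_sum_range (fun k => c k * |(y - x) k|) m]
    exact Finset.sum_congr rfl fun i _ => by rw [hcoord i]
  rw [hSm]
  exact hy.le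

lemma isNorm_finiteOpen {V : Type*} [AddCommGroup V] [Module ℝ V] {N : V → ℝ} {O : Set V}
    (hN : IsNorm N) (h : NormOpen N O) : FiniteOpen O := by
  classical
  obtain ⟨h0, h1, h2, h3⟩ := hN
  have hN0 : N 0 = 0 := (h1 0).mpr rfl
  intro n φ
  rw [Metric.isOpen_iff]
  intro aa haa
  obtain ⟨ε, hε, hball⟩ := h (φ aa) haa
  set M : ℝ := (∑ i : Fin n, N (φ (fun j => if i = j then (1:ℝ) else 0))) + 1 with hM
  have hMpos : 0 < M := by
    have h5 : 0 ≤ ∑ i : Fin n, N (φ fun j => if i = j then (1:ℝ) else 0) :=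
      Finset.sum_nonneg fun i _ => h0 _
    linarith
  refine ⟨ε / M, div_pos hε hMpos, ?_⟩
  intro y hy
  rw [mem_ball] at hy
  apply hball
  have hv : ∀ i : Fin n, |y i - aa i| ≤ dist y aa := fun i => by
    rw [← Real.dist_eq]; exact dist_le_pi_dist y aa i
  have hrepr : φ y - φ aa = ∑ i : Fin n,
      (y i - aa i) • φ (fun j => if i = j then (1:ℝ) else 0) := by
    rw [← map_sub]
    conv_lhs => rw [pi_eq_sum_univ (y - aa)]
    rw [map_sum]
    refine Finset.sum_congr rfl fun i _ => ?_
    rw [map_smul, Pi.sub_apply]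
  have hNsum : ∀ (s : Finset (Fin n)) (f : Fin n → V), N (∑ i ∈ s, f i) ≤ ∑ i ∈ s, N (f i) := by
    intro s
    induction s using Finset.induction_on with
    | empty => intro f; simp [hN0]
    | insert _ _ hx ih =>
      intro f
      rw [Finset.sum_insert hx, Finset.sum_insert hx]
      exact le_trans (h3 _ _) (by linarith [ih f])
  calc N (φ y - φ aa)
      = N (∑ i : Fin n, (y i - aa i) • φ (fun j => if i = j then (1:ℝ) else 0)) := by rw [hrepr]
    _ ≤ ∑ i : Fin n, N ((y i - aa i) • φ (fun j => if i = j then (1:ℝ) else 0)) := hNsum _ _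
    _ = ∑ i : Fin n, |y i - aa i| * N (φ (fun j => if i = j then (1:ℝ) else 0)) :=
        Finset.sum_congr rfl fun i _ => h2 _ _
    _ ≤ ∑ i : Fin n, dist y aa * N (φ (fun j => if i = j then (1:ℝ) else 0)) :=
        Finset.sum_le_sum fun i _ => mul_le_mul_of_nonneg_right (hv i) (h0 _)
    _ = dist y aa * (M - 1) := by rw [← Finset.mul_sum]; rw [hM]; ring_nf
    _ ≤ dist y aa * M := mul_le_mul_of_nonneg_left (by linarith) dist_nonneg
    _ < (ε / M) * M := mul_lt_mul_of_pos_right hy hMpos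
    _ = ε := div_mul_cancel₀ ε hMpos.ne'

theorem stmt0' {V : Type*} [AddCommGroup V] [Module ℝ V]
    (hV : Module.rank ℝ V ≤ Cardinal.aleph0) (O : Set V) :
    FiniteOpen O ↔ ∃ N : V → ℝ, IsNorm N ∧ NormOpen N O := by
  constructor
  · intro hFO
    classical
    set b := Module.Basis.ofVectorSpace ℝ V with hb
    have hcount : Countable (Module.Basis.ofVectorSpaceIndex ℝ V) := by
      rw [← Cardinal.mk_le_aleph0_iff, b.mk_eq_rank'']
      exact hV
    obtain ⟨f, hf⟩ := Countable.exists_injective_nat (Module.Basis.ofVectorSpaceIndex ℝ V)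
    set g : V →ₗ[ℝ] (ℕ →₀ ℝ) := (Finsupp.lmapDomain ℝ ℝ f).comp b.repr.toLinearMap with hg
    set π : (ℕ →₀ ℝ) →ₗ[ℝ] V :=
      (b.repr.symm.toLinearMap).comp (Finsupp.lcomapDomain f hf) with hπ
    have hπg : ∀ v : V, π (g v) = v := by
      intro v
      show b.repr.symm (Finsupp.comapDomain f (Finsupp.mapDomain f (b.repr v)) hf.injOn) = v
      have h8 : Finsupp.comapDomain f (Finsupp.mapDomain f (b.repr v)) hf.injOn = b.repr v := by
        ext i
        rw [Finsupp.comapDomain_apply, Finsupp.mapDomain_apply hf]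
      rw [h8]
      exact b.repr.symm_apply_apply v
    have hFO2 : FiniteOpen (π ⁻¹' O) := fun n φ => hFO n (π.comp φ)
    obtain ⟨N, hN, hNO⟩ := finsuppCase (π ⁻¹' O) hFO2
    obtain ⟨h0, h1, h2, h3⟩ := hN
    refine ⟨fun v => N (g v), ⟨fun v => h0 _, ?_, ?_, ?_⟩, ?_⟩
    · intro v
      rw [h1 (g v)]
      constructor
      · intro hg0
        have h9 := hπg v
        rw [hg0, map_zero] at h9
        exact h9.symm
      · rintro rfl
        exact map_zero g
    · intro aa v
      show N (g (aa • v)) = |aa| * N (g v)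
      rw [map_smul]
      exact h2 aa (g v)
    · intro v w
      show N (g (v + w)) ≤ N (g v) + N (g w)
      rw [map_add]
      exact h3 _ _
    · intro v hv
      have h10 : g v ∈ π ⁻¹' O := by
        show π (g v) ∈ O
        rw [hπg v]
        exact hv
      obtain ⟨ε, hε, hb2⟩ := hNO (g v) h10
      refine ⟨ε, hε, fun w hw => ?_⟩
      have h11 : g w ∈ π ⁻¹' O := by
        apply hb2 (g w)
        have hw' : N (g (w - v)) < ε := hw
        rwa [map_sub] at hw'
      have h12 : π (g w) ∈ O := h11
      rwa [hπg w] at h12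
  · rintro ⟨N, hN, hNO⟩
    exact isNorm_finiteOpen hN hNO

theorem stmt0 {V : Type*} [AddCommGroup V] [Module ℝ V]
    (hV : Module.rank ℝ V ≤ Cardinal.aleph0) (O : Set V) :
    FiniteOpen O ↔ ∃ N : V → ℝ, IsNorm N ∧ NormOpen N O := stmt0' hV O
end

section
/- Let V be a real vector space of uncountable dimension (Module.rank ℝ V > ℵ₀). Then the collection of norm-openable subsets of V is not a topology: there exists a family of norm-openable subsets of V whose union is not norm-openable. -/
section wnorm
variable {ι : Type*} {V : Type*} [AddCommGroup V] [Module ℝ V]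

noncomputable def wNorm (b : Module.Basis ι ℝ V) (w : ι → ℝ) (v : V) : ℝ :=
  (b.repr v).sum fun i c => w i * |c|

variable (b : Module.Basis ι ℝ V) {w : ι → ℝ}

lemma wNorm_eq_sum (v : V) {T : Finset ι} (hT : (b.repr v).support ⊆ T) :
    wNorm b w v = ∑ i ∈ T, w i * |b.repr v i| :=
  Finsupp.sum_of_support_subset _ hT _ (by simp)

lemma wNorm_nonneg (hw : ∀ i, 1 ≤ w i) (v : V) : 0 ≤ wNorm b w v := by
  rw [wNorm_eq_sum b v subset_rfl]
  exact Finset.sum_nonneg fun i _ => mul_nonneg (le_trans zero_le_one (hw i)) (abs_nonneg _)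

lemma coord_le_wNorm (hw : ∀ i, 1 ≤ w i) (v : V) (i : ι) :
    w i * |b.repr v i| ≤ wNorm b w v := by
  by_cases h : b.repr v i = 0
  · rw [h]
    simpa using wNorm_nonneg b hw v
  · rw [wNorm_eq_sum b v subset_rfl]
    exact Finset.single_le_sum
      (fun j _ => mul_nonneg (le_trans zero_le_one (hw j)) (abs_nonneg _))
      (Finsupp.mem_support_iff.mpr h)

lemma wNorm_pos (hw : ∀ i, 1 ≤ w i) {v : V} (hv : v ≠ 0) : 0 < wNorm b w v := by
  have hr : b.repr v ≠ 0 := fun h => hv (by simpa using b.repr.map_eq_zero_iff.mp h)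
  obtain ⟨i, hi⟩ : ∃ i, b.repr v i ≠ 0 := by
    by_contra h
    push_neg at h
    exact hr (Finsupp.ext h)
  calc (0:ℝ) < w i * |b.repr v i| :=
        mul_pos (lt_of_lt_of_le zero_lt_one (hw i)) (abs_pos.mpr hi)
    _ ≤ wNorm b w v := coord_le_wNorm b hw v i

lemma wNorm_isNorm (hw : ∀ i, 1 ≤ w i) : IsNorm (wNorm b w) := by
  refine ⟨wNorm_nonneg b hw, ?_, ?_, ?_⟩
  · intro x
    constructor
    · intro h
      by_contra hx
      exact absurd h (ne_of_gt (wNorm_pos b hw hx))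
    · rintro rfl
      simp [wNorm]
  · intro a x
    have hsub : (b.repr (a • x)).support ⊆ (b.repr x).support := by
      rw [map_smul]
      exact Finsupp.support_smul
    rw [wNorm_eq_sum b _ hsub, wNorm_eq_sum b x subset_rfl, Finset.mul_sum]
    refine Finset.sum_congr rfl fun i _ => ?_
    rw [map_smul, Finsupp.smul_apply, smul_eq_mul, abs_mul]
    ring
  · intro x y
    classical
    have hx : (b.repr x).support ⊆ (b.repr x).support ∪ (b.repr y).support :=
      Finset.subset_union_left
    have hy : (b.repr y).support ⊆ (b.repr x).support ∪ (b.repr y).support :=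
      Finset.subset_union_right
    have hxy : (b.repr (x + y)).support ⊆ (b.repr x).support ∪ (b.repr y).support := by
      rw [map_add]
      exact Finsupp.support_add
    rw [wNorm_eq_sum b _ hxy, wNorm_eq_sum b x hx, wNorm_eq_sum b y hy,
      ← Finset.sum_add_distrib]
    refine Finset.sum_le_sum fun i _ => ?_
    rw [map_add, Finsupp.add_apply, ← mul_add]
    exact mul_le_mul_of_nonneg_left (abs_add_le _ _) (le_trans zero_le_one (hw i))

end wnorm

lemma IsNorm.sub_comm {V : Type*} [AddCommGroup V] [Module ℝ V] {N : V → ℝ}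
    (hN : IsNorm N) (x y : V) : N (x - y) = N (y - x) := by
  have := hN.2.2.1 (-1) (y - x)
  simpa [neg_sub] using this

section comb
variable {ι : Type*}

def Gset (ι : Type*) : Set ι := {i | Set.Countable {j | WellOrderingRel j i}}

lemma Gset_uncountable [Uncountable ι] : ¬ (Gset ι).Countable := by
  intro hc
  have hne : (Gset ι)ᶜ.Nonempty := by
    by_contra h
    rw [Set.not_nonempty_iff_eq_empty, Set.compl_empty_iff] at h
    have : Countable ι := Set.countable_univ_iff.mp (h ▸ hc)
    exact not_countable this
  obtain ⟨m, hm, hmin⟩ := (IsWellFounded.wf (r := (WellOrderingRel : ι → ι → Prop))).has_min _ hne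
  have hsub : {j | WellOrderingRel j m} ⊆ Gset ι := by
    intro j hj
    by_contra hjG
    exact hmin j hjG hj
  exact hm (hc.mono hsub)

lemma Gset_bound [Uncountable ι] {A : Set ι} (hA : A.Countable) (hAG : A ⊆ Gset ι) :
    ∃ β ∈ Gset ι, ∀ α ∈ A, WellOrderingRel α β := by
  by_contra h
  push_neg at h
  apply Gset_uncountable (ι := ι)
  have hcov : Gset ι ⊆ ⋃ α ∈ A, ({α} ∪ {j | WellOrderingRel j α}) := by
    intro β hβ
    obtain ⟨α, hαA, hαβ⟩ := h β hβ
    rcases trichotomous_of WellOrderingRel α β with h1 | h1 | h1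
    · exact absurd h1 hαβ
    · exact Set.mem_biUnion hαA (Or.inl (by simp [h1]))
    · exact Set.mem_biUnion hαA (Or.inr h1)
  exact (hA.biUnion fun α hα => (Set.countable_singleton α).union (hAG hα)).mono hcov

open Classical in
noncomputable def phiFun {ι : Type*} (β : ι) : ι → ℕ :=
  if h : Set.Countable {j | WellOrderingRel j β} then
    fun α => if h2 : WellOrderingRel α β then
      (Set.countable_iff_exists_injective.mp h).choose ⟨α, h2⟩ else 0
  else fun _ => 0

lemma phiFun_inj {β : ι} (hβ : Set.Countable {j | WellOrderingRel j β}) {α₁ α₂ : ι}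
    (h1 : WellOrderingRel α₁ β) (h2 : WellOrderingRel α₂ β)
    (heq : phiFun β α₁ = phiFun β α₂) : α₁ = α₂ := by
  classical
  simp only [phiFun, dif_pos hβ, dif_pos h1, dif_pos h2] at heq
  have := (Set.countable_iff_exists_injective.mp hβ).choose_spec heq
  exact congrArg Subtype.val this

open Classical in
noncomputable def tz {ι : Type*} (β α : ι) : ℝ := 1 / (phiFun β α + 1)

lemma tz_pos (β α : ι) : 0 < tz β α := by
  unfold tz; positivity

lemma tz_le_one (β α : ι) : tz β α ≤ 1 := by
  rw [tz, div_le_one (by positivity)]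
  have : (0:ℝ) ≤ (phiFun β α : ℝ) := Nat.cast_nonneg _
  linarith

end comb

section main
variable {ι : Type*} {V : Type*} [AddCommGroup V] [Module ℝ V] (b : Module.Basis ι ℝ V)

/-- The "spokes" set: for each `β` with countably many predecessors and each `α ≺ β`,
a single point `b β + (1/(φ_β α + 1)) • b α`. -/
def Zset : Set V :=
  {v | ∃ α β : ι, β ∈ Gset ι ∧ WellOrderingRel α β ∧ v = b β + tz β α • b α}

open Classical in
lemma spoke_repr (c : ℝ) (α β i : ι) :
    b.repr (b β + c • b α) i =
      (if β = i then (1:ℝ) else 0) + c * (if α = i then 1 else 0) := by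
  classical
  rw [map_add, map_smul, Module.Basis.repr_self, Module.Basis.repr_self, Finsupp.add_apply,
    Finsupp.smul_apply, Finsupp.single_apply, Finsupp.single_apply, smul_eq_mul]

lemma basis_not_mem_Zset (γ : ι) : b γ ∉ Zset b := by
  classical
  rintro ⟨α, β, hβ, hαβ, heq⟩
  have hne : α ≠ β := fun h => absurd (h ▸ hαβ) (irrefl β)
  by_cases hγα : γ = α
  · have h1 := congrArg (fun v => b.repr v β) heq
    have hγβ : ¬ γ = β := fun h => hne (hγα.symm.trans h)
    simp [spoke_repr, Module.Basis.repr_self, Finsupp.single_apply, hne, hγβ] at h1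
  · have h1 := congrArg (fun v => b.repr v α) heq
    have hβα : ¬ β = α := fun h => hne h.symm
    have hp := tz_pos β α
    simp [spoke_repr, Module.Basis.repr_self, Finsupp.single_apply, hγα, hβα] at h1
    linarith

lemma sep (x : V) (hx : x ∉ Zset b) :
    ∃ N : V → ℝ, IsNorm N ∧ ∃ δ > 0, ∀ z ∈ Zset b, δ ≤ N (x - z) := by
  classical
  set Sx := (b.repr x).support with hSx
  set w : ι → ℝ := fun i =>
    max ((Sx.sup fun β => if β ∈ Gset ι ∧ WellOrderingRel i β then phiFun β i + 1 else 1 : ℕ) : ℝ) 1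
    with hwdef
  have hw1 : ∀ i, 1 ≤ w i := fun i => le_max_right _ _
  set N := wNorm b w with hNdef
  have hN : IsNorm N := wNorm_isNorm b hw1
  set K : Finset V :=
    ((Sx ×ˢ Sx).image fun p : ι × ι => b p.2 + tz p.2 p.1 • b p.1).erase x with hK
  set δ₂ : ℝ := if h : K.Nonempty then K.inf' h (fun v => N (x - v)) else 1 with hδ₂
  have hδ₂pos : 0 < δ₂ := by
    rw [hδ₂]; split_ifs with h
    · rw [Finset.lt_inf'_iff]
      intro v hv
      exact wNorm_pos b hw1 (sub_ne_zero.mpr (Ne.symm (Finset.ne_of_mem_erase hv)))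
    · exact one_pos
  refine ⟨N, hN, min 1 δ₂, lt_min one_pos hδ₂pos, ?_⟩
  rintro z ⟨α, β, hβG, hαβ, rfl⟩
  have hne : α ≠ β := fun h => absurd (h ▸ hαβ) (irrefl β)
  have hc0 : 0 < tz β α := tz_pos β α
  by_cases hβx : β ∈ Sx
  · by_cases hαx : α ∈ Sx
    · -- both coordinates in the support of x : z is in the finite exceptional set K
      have hzZ : (b β + tz β α • b α) ∈ Zset b := ⟨α, β, hβG, hαβ, rfl⟩
      have hzK : (b β + tz β α • b α) ∈ K :=
        Finset.mem_erase.mpr ⟨fun h => hx (h ▸ hzZ),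
          Finset.mem_image.mpr ⟨(α, β), Finset.mem_product.mpr ⟨hαx, hβx⟩, rfl⟩⟩
      calc min 1 δ₂ ≤ δ₂ := min_le_right _ _
        _ ≤ N (x - (b β + tz β α • b α)) := by
            rw [hδ₂, dif_pos ⟨_, hzK⟩]; exact Finset.inf'_le _ hzK
    · -- α outside the support : use coordinate α, weight beats 1/tz
      have hxα : b.repr x α = 0 := Finsupp.notMem_support_iff.mp hαx
      have hcoord : b.repr (x - (b β + tz β α • b α)) α = -(tz β α) := by
        rw [map_sub, Finsupp.sub_apply, spoke_repr, hxα,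
          if_neg (show ¬ β = α from fun h => hne h.symm), if_pos rfl]
        ring
      have hwα : ((phiFun β α : ℝ) + 1) ≤ w α := by
        have h1 : (if β ∈ Gset ι ∧ WellOrderingRel α β then phiFun β α + 1 else 1) ≤
            (Sx.sup fun β' => if β' ∈ Gset ι ∧ WellOrderingRel α β' then phiFun β' α + 1 else 1) :=
          Finset.le_sup (f := fun β' =>
            if β' ∈ Gset ι ∧ WellOrderingRel α β' then phiFun β' α + 1 else 1) hβx
        rw [if_pos ⟨hβG, hαβ⟩] at h1
        calc ((phiFun β α : ℝ) + 1) = ((phiFun β α + 1 : ℕ) : ℝ) := by push_cast; ring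
          _ ≤ _ := by exact_mod_cast h1
          _ ≤ w α := le_max_left _ _
      have hge1 : (1:ℝ) ≤ w α * tz β α := by
        have h2 : ((phiFun β α : ℝ) + 1) * tz β α ≤ w α * tz β α :=
          mul_le_mul_of_nonneg_right hwα hc0.le
        have h3 : ((phiFun β α : ℝ) + 1) * tz β α = 1 := by
          rw [tz]; field_simp
        linarith
      calc min 1 δ₂ ≤ 1 := min_le_left _ _
        _ ≤ w α * tz β α := hge1
        _ = w α * |b.repr (x - (b β + tz β α • b α)) α| := by
            rw [hcoord, abs_neg, abs_of_pos hc0]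
        _ ≤ N (x - (b β + tz β α • b α)) := coord_le_wNorm b hw1 _ α
  · -- β outside the support : use coordinate β
    have hxβ : b.repr x β = 0 := Finsupp.notMem_support_iff.mp hβx
    have hcoord : b.repr (x - (b β + tz β α • b α)) β = -1 := by
      rw [map_sub, Finsupp.sub_apply, spoke_repr, hxβ, if_pos rfl, if_neg hne]
      ring
    calc min 1 δ₂ ≤ 1 := min_le_left _ _
      _ ≤ w β := hw1 β
      _ = w β * |b.repr (x - (b β + tz β α • b α)) β| := by rw [hcoord]; simp
      _ ≤ N (x - (b β + tz β α • b α)) := coord_le_wNorm b hw1 _ β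

lemma not_normOpen [Uncountable ι] (N : V → ℝ) (hN : IsNorm N) :
    ¬ NormOpen N (Zset b)ᶜ := by
  intro hop
  classical
  set En : ℕ → Set ι := fun n => {i | i ∈ Gset ι ∧ N (b i) ≤ n} with hEn
  have hcov : Gset ι ⊆ ⋃ n, En n := fun i hi =>
    Set.mem_iUnion.mpr ⟨⌈N (b i)⌉₊, hi, Nat.le_ceil _⟩
  have hex : ∃ n, ¬ (En n).Countable := by
    by_contra h
    push_neg at h
    exact Gset_uncountable (ι := ι) ((Set.countable_iUnion h).mono hcov)
  obtain ⟨n, hn⟩ := hex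
  have hinf : (En n).Infinite := by
    by_contra h
    rw [Set.not_infinite] at h
    exact hn h.countable
  set f := hinf.natEmbedding with hf
  set A : Set ι := Set.range fun k => (f k : ι) with hA
  have hAE : A ⊆ En n := by rintro _ ⟨k, rfl⟩; exact (f k).2
  have hAG : A ⊆ Gset ι := fun a ha => (hAE ha).1
  have hAc : A.Countable := Set.countable_range _
  have hAinf : A.Infinite :=
    Set.infinite_range_of_injective fun k l h => f.injective (Subtype.val_injective h)
  obtain ⟨β, hβG, hbd⟩ := Gset_bound hAc hAG
  have hxU : b β ∈ (Zset b)ᶜ := basis_not_mem_Zset b β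
  obtain ⟨ε, hε, hball⟩ := hop _ hxU
  have hexα : ∃ α ∈ A, (⌈(n:ℝ)/ε⌉₊) < phiFun β α := by
    by_contra h
    push_neg at h
    apply hAinf
    have hinj : Set.InjOn (phiFun β) A := fun a ha a' ha' hh =>
      phiFun_inj hβG (hbd a ha) (hbd a' ha') hh
    apply Set.Finite.of_finite_image ?_ hinj
    exact (Set.finite_Iic (⌈(n:ℝ)/ε⌉₊)).subset (by rintro _ ⟨a, ha, rfl⟩; exact h a ha)
  obtain ⟨α, hαA, hφ⟩ := hexα
  have hz : (b β + tz β α • b α) ∈ Zset b := ⟨α, β, hβG, hbd α hαA, rfl⟩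
  have hNα : N (b α) ≤ n := (hAE hαA).2
  have hdist : N ((b β + tz β α • b α) - b β) < ε := by
    have h1 : (b β + tz β α • b α) - b β = tz β α • b α := by abel
    rw [h1, hN.2.2.1, abs_of_pos (tz_pos β α)]
    have hNα0 : 0 ≤ N (b α) := hN.1 _
    calc tz β α * N (b α) ≤ tz β α * n := mul_le_mul_of_nonneg_left hNα (tz_pos β α).le
      _ < ε := by
        rw [tz, div_mul_eq_mul_div, one_mul, div_lt_iff₀ (by positivity)]
        have h2 : (n:ℝ)/ε ≤ (⌈(n:ℝ)/ε⌉₊ : ℝ) := Nat.le_ceil _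
        have h3 : ((⌈(n:ℝ)/ε⌉₊ : ℝ)) < (phiFun β α : ℝ) := by exact_mod_cast hφ
        have h4 : (n:ℝ) ≤ (⌈(n:ℝ)/ε⌉₊ : ℝ) * ε := by
          rw [← div_le_iff₀ hε]; exact h2
        nlinarith
  exact hball _ hdist hz

end main

theorem main_aux {ι : Type*} {V : Type*} [AddCommGroup V] [Module ℝ V]
    [Uncountable ι] (b : Module.Basis ι ℝ V) :
    ∃ S : Set (Set V),
      (∀ U ∈ S, ∃ N : V → ℝ, IsNorm N ∧ NormOpen N U) ∧
      ¬ ∃ N : V → ℝ, IsNorm N ∧ NormOpen N (⋃₀ S) := by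
  refine ⟨{O | (∃ N, IsNorm N ∧ NormOpen N O) ∧ O ⊆ (Zset b)ᶜ}, fun O hO => hO.1, ?_⟩
  have hU : ⋃₀ {O : Set V | (∃ N, IsNorm N ∧ NormOpen N O) ∧ O ⊆ (Zset b)ᶜ} = (Zset b)ᶜ := by
    apply Set.Subset.antisymm
    · exact Set.sUnion_subset fun O hO => hO.2
    · intro x hx
      obtain ⟨N, hN, δ, hδ, hbound⟩ := sep b x hx
      refine Set.mem_sUnion.mpr ⟨{y | N (y - x) < δ}, ⟨⟨N, hN, ?_⟩, ?_⟩, ?_⟩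
      · intro y hy
        refine ⟨δ - N (y - x), by simpa using hy, fun y' hy' => ?_⟩
        have heq : y' - x = (y' - y) + (y - x) := by abel
        have hyy : N (y - x) < δ := hy
        calc N (y' - x) = N ((y' - y) + (y - x)) := by rw [heq]
          _ ≤ N (y' - y) + N (y - x) := hN.2.2.2 _ _
          _ < δ := by linarith
      · intro y hy hyZ
        have h1 := hbound y hyZ
        rw [hN.sub_comm x y] at h1
        exact absurd (hy : N (y - x) < δ) (not_lt.mpr h1)
      · show N (x - x) < δ
        rw [sub_self, (hN.2.1 0).mpr rfl]
        exact hδ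
  rw [hU]
  rintro ⟨N, hN, hop⟩
  exact not_normOpen b N hN hop

/-- If `V` has uncountable dimension, the collection of norm-openable subsets of
`V` is not a topology: some family of norm-openable sets has a union which is
not norm-openable. -/
theorem stmt1 {V : Type*} [AddCommGroup V] [Module ℝ V]
    (hV : Cardinal.aleph0 < Module.rank ℝ V) :
    ∃ S : Set (Set V),
      (∀ U ∈ S, ∃ N : V → ℝ, IsNorm N ∧ NormOpen N U) ∧
      ¬ ∃ N : V → ℝ, IsNorm N ∧ NormOpen N (⋃₀ S) := by

  have hrank : Module.rank ℝ V = Cardinal.mk (Module.Free.ChooseBasisIndex ℝ V) :=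
    Module.Free.rank_eq_card_chooseBasisIndex ℝ V
  have : Uncountable (Module.Free.ChooseBasisIndex ℝ V) :=
    Cardinal.aleph0_lt_mk_iff.mp (hrank ▸ hV)
  exact main_aux (Module.Free.chooseBasis ℝ V)
end

section
/- Let V be a real vector space of countable dimension (Module.rank ℝ V ≤ ℵ₀). Then every countable sequence (N_n)_{n ∈ ℕ} of norms on V is dominated: there exist a norm N' on V and positive real constants c_n such that N_n(x) ≤ c_n · N'(x) for all n ∈ ℕ and all x ∈ V. -/
/-- On a vector space of countable dimension, every countable sequence of norms
is dominated by a single norm. -/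
theorem stmt2 {V : Type*} [AddCommGroup V] [Module ℝ V]
    (hV : Module.rank ℝ V ≤ Cardinal.aleph0)
    (N : ℕ → V → ℝ) (hN : ∀ n, IsNorm (N n)) :
    ∃ N' : V → ℝ, IsNorm N' ∧
      ∃ c : ℕ → ℝ, (∀ n, 0 < c n) ∧ ∀ n x, N n x ≤ c n * N' x := by
  classical
  set b := Module.Basis.ofVectorSpace ℝ V with hb
  set ι := Module.Basis.ofVectorSpaceIndex ℝ V
  have hcount : Countable ι := by
    rw [← Cardinal.mk_le_aleph0_iff]
    rw [b.mk_eq_rank'']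
    exact hV
  obtain ⟨e, he⟩ := (hcount.exists_injective_nat)
  -- auxiliary facts about norms
  have Nnn : ∀ n x, 0 ≤ N n x := fun n => (hN n).1
  have N0 : ∀ n, N n (0 : V) = 0 := fun n => ((hN n).2.1 0).mpr rfl
  have Nsmul : ∀ n (a : ℝ) (x : V), N n (a • x) = |a| * N n x := fun n => (hN n).2.2.1
  have Nadd : ∀ n x y, N n (x + y) ≤ N n x + N n y := fun n => (hN n).2.2.2
  set d : ι → ℝ := fun i => (∑ k ∈ Finset.range (e i + 1), N k (b i)) + 1 with hd
  have hd1 : ∀ i, 1 ≤ d i := by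
    intro i
    have : 0 ≤ ∑ k ∈ Finset.range (e i + 1), N k (b i) :=
      Finset.sum_nonneg fun k _ => Nnn k _
    simp [hd]; linarith
  have hd0 : ∀ i, 0 ≤ d i := fun i => le_trans zero_le_one (hd1 i)
  have hdle : ∀ n (i : ι), n ≤ e i → N n (b i) ≤ d i := by
    intro n i hni
    have : N n (b i) ≤ ∑ k ∈ Finset.range (e i + 1), N k (b i) :=
      Finset.single_le_sum (f := fun k => N k (b i)) (fun k _ => Nnn k _)
        (Finset.mem_range.mpr (Nat.lt_succ_of_le hni))
    simp [hd]; linarith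
  set N' : V → ℝ := fun x => (b.repr x).sum fun i a => |a| * d i with hN'
  have key : ∀ x : V, N' x = ∑ i ∈ (b.repr x).support, |b.repr x i| * d i := fun x => rfl
  -- rewrite N' over any finset containing the support
  have hNs : ∀ (x : V) (s : Finset ι), (b.repr x).support ⊆ s →
      N' x = ∑ i ∈ s, |b.repr x i| * d i := by
    intro x s hs
    rw [key]
    apply Finset.sum_subset hs
    intro i _ hi
    simp [Finsupp.notMem_support_iff.mp hi]
  have hN'norm : IsNorm N' := by
    refine ⟨fun x => Finset.sum_nonneg fun i _ => mul_nonneg (abs_nonneg _) (hd0 i), ?_, ?_, ?_⟩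
    · intro x
      constructor
      · intro h
        by_contra hx
        have hsupp : (b.repr x).support.Nonempty := by
          rw [Finsupp.support_nonempty_iff]
          simpa using hx
        obtain ⟨i, hi⟩ := hsupp
        have h1 : 0 < |b.repr x i| * d i := by
          have := Finsupp.mem_support_iff.mp hi
          have := abs_pos.mpr this
          nlinarith [hd1 i]
        have h2 : |b.repr x i| * d i ≤ ∑ j ∈ (b.repr x).support, |b.repr x j| * d j :=
          Finset.single_le_sum (f := fun j => |b.repr x j| * d j) (fun j _ => mul_nonneg (abs_nonneg _) (hd0 j)) hi
        rw [← key x] at h2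
        linarith
      · rintro rfl
        simp [key]
    · intro a x
      rcases eq_or_ne a 0 with rfl | ha
      · rw [zero_smul, key]
        simp
      rw [hNs (a • x) ((b.repr x).support) (by
        intro i hi
        rw [Finsupp.mem_support_iff] at hi ⊢
        simp only [map_smul, Finsupp.smul_apply, smul_eq_mul] at hi
        exact fun h => hi (by rw [h, mul_zero])), key, Finset.mul_sum]
      apply Finset.sum_congr rfl
      intro i _
      simp [abs_mul]
      ring
    · intro x y
      set s := (b.repr x).support ∪ (b.repr y).support with hs
      have hx : (b.repr x).support ⊆ s := Finset.subset_union_left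
      have hy : (b.repr y).support ⊆ s := Finset.subset_union_right
      have hxy : (b.repr (x + y)).support ⊆ s := by
        intro i hi
        rw [Finsupp.mem_support_iff] at hi
        simp only [map_add, Finsupp.add_apply] at hi
        by_contra hc
        simp only [hs, Finset.mem_union, Finsupp.mem_support_iff, not_or, not_not] at hc
        simp [hc.1, hc.2] at hi
      rw [hNs x s hx, hNs y s hy, hNs (x+y) s hxy, ← Finset.sum_add_distrib]
      apply Finset.sum_le_sum
      intro i _
      have : |b.repr (x+y) i| ≤ |b.repr x i| + |b.repr y i| := by
        simp only [map_add, Finsupp.add_apply]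
        exact abs_add_le _ _
      nlinarith [hd0 i, abs_nonneg (b.repr x i), abs_nonneg (b.repr y i)]
  -- constants
  set c : ℕ → ℝ := fun n => 1 + ∑ k ∈ Finset.range n,
      (if h : ∃ i : ι, e i = k then N n (b h.choose) else 0) with hc
  have hc1 : ∀ n, 1 ≤ c n := by
    intro n
    have : 0 ≤ ∑ k ∈ Finset.range n,
        (if h : ∃ i : ι, e i = k then N n (b h.choose) else 0) := by
      apply Finset.sum_nonneg
      intro k _
      split
      · exact Nnn n _
      · exact le_rfl
    show 1 ≤ 1 + _
    linarith
  have hkey : ∀ n (i : ι), N n (b i) ≤ c n * d i := by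
    intro n i
    rcases le_or_gt n (e i) with h | h
    · calc N n (b i) ≤ d i := hdle n i h
        _ = 1 * d i := (one_mul _).symm
        _ ≤ c n * d i := by nlinarith [hc1 n, hd0 i]
    · have hmem : e i ∈ Finset.range n := Finset.mem_range.mpr h
      have hex : ∃ j : ι, e j = e i := ⟨i, rfl⟩
      have hch : hex.choose = i := he (hex.choose_spec)
      have h1 : N n (b i) ≤ ∑ k ∈ Finset.range n,
          (if h : ∃ j : ι, e j = k then N n (b h.choose) else 0) := by
        have := Finset.single_le_sum (f := fun k =>
            if h : ∃ j : ι, e j = k then N n (b h.choose) else 0)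
          (fun k _ => by split; exacts [Nnn n _, le_refl 0]) hmem
        simpa [hex, hch] using this
      have h2 : N n (b i) ≤ c n := by show N n (b i) ≤ 1 + _; linarith
      calc N n (b i) = N n (b i) * 1 := (mul_one _).symm
        _ ≤ c n * d i := by
            apply mul_le_mul h2 (hd1 i) zero_le_one (le_trans zero_le_one (hc1 n))
  refine ⟨N', hN'norm, c, fun n => lt_of_lt_of_le one_pos (hc1 n), ?_⟩
  intro n x
  have hx : x = ∑ i ∈ (b.repr x).support, b.repr x i • b i := by
    conv_lhs => rw [← b.linearCombination_repr x]
    rw [Finsupp.linearCombination_apply, Finsupp.sum]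
  calc N n x ≤ ∑ i ∈ (b.repr x).support, N n (b.repr x i • b i) := by
        conv_lhs => rw [hx]
        exact Finset.le_sum_of_subadditive (N n) (N0 n).le (Nadd n) _ _
    _ = ∑ i ∈ (b.repr x).support, |b.repr x i| * N n (b i) := by
        apply Finset.sum_congr rfl; intro i _; exact Nsmul n _ _
    _ ≤ ∑ i ∈ (b.repr x).support, |b.repr x i| * (c n * d i) := by
        apply Finset.sum_le_sum
        intro i _
        exact mul_le_mul_of_nonneg_left (hkey n i) (abs_nonneg _)
    _ = c n * N' x := by
        rw [key, Finset.mul_sum]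
        apply Finset.sum_congr rfl
        intro i _; ring
end

section
/- Let V be a real vector space of uncountable dimension κ (Module.rank ℝ V = κ with κ > ℵ₀). Then there exists a family of norms on V indexed by a set of cardinality κ that is not dominated: for every norm N' on V there is some index i such that no positive constant c satisfies N_i ≤ c · N' pointwise. -/
universe u

open Cardinal

section Wsum

variable {ι : Type*}

/-- Weighted ℓ¹ sum of a finitely supported function. -/
noncomputable def wsum (w : ι → ℝ) (f : ι →₀ ℝ) : ℝ := f.sum fun j v => w j * |v|

lemma wsum_eq (w : ι → ℝ) (f : ι →₀ ℝ) {s : Finset ι} (hs : f.support ⊆ s) :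
    wsum w f = ∑ j ∈ s, w j * |f j| :=
  Finsupp.sum_of_support_subset f hs _ (by simp)

lemma wsum_nonneg {w : ι → ℝ} (hw : ∀ j, 0 ≤ w j) (f : ι →₀ ℝ) : 0 ≤ wsum w f := by
  rw [wsum_eq w f subset_rfl]
  exact Finset.sum_nonneg fun j _ => mul_nonneg (hw j) (abs_nonneg _)

lemma wsum_eq_zero_iff {w : ι → ℝ} (hw : ∀ j, 1 ≤ w j) (f : ι →₀ ℝ) :
    wsum w f = 0 ↔ f = 0 := by
  constructor
  · intro h
    rw [wsum_eq w f subset_rfl] at h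
    have hz := (Finset.sum_eq_zero_iff_of_nonneg
      (fun j _ => mul_nonneg (le_trans zero_le_one (hw j)) (abs_nonneg _))).mp h
    ext j
    by_contra hj
    have hjs : j ∈ f.support := Finsupp.mem_support_iff.mpr (by simpa using hj)
    have := hz j hjs
    have hwj : w j ≠ 0 := by have := hw j; linarith
    have : |f j| = 0 := by
      rcases mul_eq_zero.mp this with h' | h'
      · exact absurd h' hwj
      · exact h'
    simp_all
  · rintro rfl; simp [wsum]

lemma wsum_smul (w : ι → ℝ) (a : ℝ) (f : ι →₀ ℝ) :
    wsum w (a • f) = |a| * wsum w f := by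
  rw [wsum_eq w (a • f) Finsupp.support_smul, wsum_eq w f subset_rfl, Finset.mul_sum]
  refine Finset.sum_congr rfl fun j _ => ?_
  rw [Finsupp.smul_apply, smul_eq_mul, abs_mul]; ring

lemma wsum_add {w : ι → ℝ} (hw : ∀ j, 0 ≤ w j) (f g : ι →₀ ℝ) :
    wsum w (f + g) ≤ wsum w f + wsum w g := by
  classical
  have h1 : (f + g).support ⊆ f.support ∪ g.support := Finsupp.support_add
  rw [wsum_eq w (f + g) h1, wsum_eq w f Finset.subset_union_left,
    wsum_eq w g Finset.subset_union_right, ← Finset.sum_add_distrib]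
  refine Finset.sum_le_sum fun j _ => ?_
  rw [Finsupp.add_apply, ← mul_add]
  exact mul_le_mul_of_nonneg_left (abs_add_le _ _) (hw j)

lemma wsum_single (w : ι → ℝ) (j : ι) : wsum w (Finsupp.single j (1 : ℝ)) = w j := by
  rw [wsum, Finsupp.sum_single_index] <;> simp

end Wsum

lemma isNorm_wsum {V : Type*} [AddCommGroup V] [Module ℝ V] {ι : Type*}
    (b : Module.Basis ι ℝ V) (w : ι → ℝ) (hw : ∀ j, 1 ≤ w j) :
    (∀ x, 0 ≤ wsum w (b.repr x)) ∧ (∀ x, wsum w (b.repr x) = 0 ↔ x = 0) ∧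
    (∀ (a : ℝ) (x : V), wsum w (b.repr (a • x)) = |a| * wsum w (b.repr x)) ∧
    ∀ x y, wsum w (b.repr (x + y)) ≤ wsum w (b.repr x) + wsum w (b.repr y) := by
  refine ⟨fun x => wsum_nonneg (fun j => le_trans zero_le_one (hw j)) _,
    fun x => (wsum_eq_zero_iff hw _).trans ?_,
    fun a x => by rw [map_smul, wsum_smul],
    fun x y => by rw [map_add]; exact wsum_add (fun j => le_trans zero_le_one (hw j)) _ _⟩
  constructor
  · intro h
    have := b.repr.map_eq_zero_iff.mp (by simpa using h)
    simpa using this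
  · rintro rfl; simp

/-- On a vector space of uncountable dimension `κ`, there is an undominated
family of norms indexed by a set of cardinality `κ`. -/
theorem stmt3 {V : Type u} [AddCommGroup V] [Module ℝ V] {κ : Cardinal.{u}}
    (hκ : Module.rank ℝ V = κ) (huncount : Cardinal.aleph0 < κ) :
    ∃ (ι : Type u) (N : ι → V → ℝ), Cardinal.mk ι = κ ∧ (∀ i, IsNorm (N i)) ∧
      ∀ N' : V → ℝ, IsNorm N' →
        ∃ i, ∀ c : ℝ, 0 < c → ¬ ∀ x, N i x ≤ c * N' x := by
  classical
  set B := Module.Basis.ofVectorSpace ℝ V with hB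
  set ι := ↥(Module.Basis.ofVectorSpaceIndex ℝ V) with hιdef
  have hι : (Cardinal.mk ι : Cardinal.{u}) = κ := by rw [B.mk_eq_rank'', hκ]
  -- the type `W` of order type ω₁
  set W := (Cardinal.aleph 1).ord.ToType with hWdef
  have hW : (Cardinal.mk W : Cardinal.{u}) = Cardinal.aleph 1 := by
    rw [Cardinal.mk_toType, Cardinal.card_ord]
  -- embedding of W into ι
  have hle : (Cardinal.mk W : Cardinal.{u}) ≤ Cardinal.mk ι := by
    rw [hW, hι, ← Cardinal.succ_aleph0]
    exact Order.succ_le_of_lt huncount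
  obtain ⟨g⟩ := Cardinal.le_def (W) (ι) |>.mp hle
  -- initial segments of W are countable
  haveI hwo : IsWellOrder W (· < ·) := isWellOrder_lt
  have hcount : ∀ β : W, ({γ : W | γ < β} : Set W).Countable := by
    intro β
    rw [Cardinal.countable_iff_lt_aleph_one]
    have h2 := Ordinal.typein_lt_type (α := W) (· < ·) β
    rw [Ordinal.type_toType] at h2
    have h3 := Cardinal.lt_ord.mp h2
    exact lt_of_eq_of_lt (Ordinal.card_typein (r := ((· < ·) : W → W → Prop)) β) h3
  -- choose injections of initial segments into ℕ
  have hseg : ∀ β : W, ∃ f : {γ : W // γ < β} → ℕ, Function.Injective f := by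
    intro β
    haveI : Countable {γ : W // γ < β} := (hcount β).to_subtype
    exact exists_injective_nat _
  choose e he using hseg
  set E : W → W → ℕ := fun β α => if h : α < β then e β ⟨α, h⟩ else 0 with hEdef
  -- the weights
  set bigw : ι → ι → ℝ := fun i j =>
    if hi : ∃ α, g α = i then
      if hj : ∃ β, g β = j then (E hj.choose hi.choose : ℝ) + 1 else 1
    else 1 with hbigwdef
  have hbig : ∀ i j, 1 ≤ bigw i j := by
    intro i j
    simp only [hbigwdef]
    split_ifs with h1 h2
    · exact le_add_of_nonneg_left (Nat.cast_nonneg _)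
    · exact le_refl 1
    · exact le_refl 1
  have hbigeval : ∀ α β : W, bigw (g α) (g β) = (E β α : ℝ) + 1 := by
    intro α β
    have hi : ∃ α', g α' = g α := ⟨α, rfl⟩
    have hj : ∃ β', g β' = g β := ⟨β, rfl⟩
    have hα : hi.choose = α := g.injective hi.choose_spec
    have hβ : hj.choose = β := g.injective hj.choose_spec
    simp only [hbigwdef, dif_pos hi, dif_pos hj, hα, hβ]
  refine ⟨ι, fun i x => wsum (bigw i) (B.repr x), hι,
    fun i => isNorm_wsum B (bigw i) (hbig i), ?_⟩
  have hNeval : ∀ i j, wsum (bigw i) (B.repr (B j)) = bigw i j := by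
    intro i j; rw [B.repr_self, wsum_single]
  intro N' hN'
  by_contra hcon
  push_neg at hcon
  choose cc hcpos hdom using hcon
  -- positivity of N' on basis vectors
  have hapos : ∀ j : ι, 0 < N' (B j) := by
    intro j
    rcases lt_or_eq_of_le (hN'.1 (B j)) with h | h
    · exact h
    · exact absurd ((hN'.2.1 _).mp h.symm) (B.ne_zero j)
  -- an uncountable level set for N' on the copy of W
  have hcoverJ : ∀ β : W, ∃ n : ℕ, N' (B (g β)) ≤ (n : ℝ) := fun β => exists_nat_ge _
  obtain ⟨n, hJn⟩ : ∃ n : ℕ, ¬ ({β : W | N' (B (g β)) ≤ (n : ℝ)}).Countable := by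
    by_contra h'
    push_neg at h'
    have huniv : (Set.univ : Set W).Countable := by
      have : (Set.univ : Set W) = ⋃ n : ℕ, {β : W | N' (B (g β)) ≤ (n : ℝ)} := by
        ext β; simpa using hcoverJ β
      rw [this]
      exact Set.countable_iUnion h'
    have : Countable W := Set.countable_univ_iff.mp huniv
    have : (Cardinal.mk W) ≤ Cardinal.aleph0 := Cardinal.mk_le_aleph0
    rw [hW] at this
    exact absurd this (not_le.mpr Cardinal.aleph0_lt_aleph_one)
  -- an uncountable set of rows with a uniform bound
  obtain ⟨m, hAm⟩ : ∃ m : ℕ, ¬ ({α : W | cc (g α) * (n : ℝ) ≤ (m : ℝ)}).Countable := by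
    by_contra h'
    push_neg at h'
    have huniv : (Set.univ : Set W).Countable := by
      have : (Set.univ : Set W) = ⋃ m : ℕ, {α : W | cc (g α) * (n : ℝ) ≤ (m : ℝ)} := by
        ext α; simpa using exists_nat_ge (cc (g α) * (n : ℝ))
      rw [this]
      exact Set.countable_iUnion h'
    have : Countable W := Set.countable_univ_iff.mp huniv
    have : (Cardinal.mk W) ≤ Cardinal.aleph0 := Cardinal.mk_le_aleph0
    rw [hW] at this
    exact absurd this (not_le.mpr Cardinal.aleph0_lt_aleph_one)
  set A := {α : W | cc (g α) * (n : ℝ) ≤ (m : ℝ)} with hAdef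
  have hAinf : A.Infinite := fun h => hAm h.countable
  obtain ⟨F, hFsub, hFcard⟩ := hAinf.exists_subset_card_eq (m + 1)
  have hFne : F.Nonempty := by rw [← Finset.card_pos, hFcard]; omega
  -- the uncountable level set is unbounded in W
  obtain ⟨β, hβJ, hβgt⟩ : ∃ β ∈ {β : W | N' (B (g β)) ≤ (n : ℝ)}, F.max' hFne < β := by
    by_contra hb
    push_neg at hb
    apply hJn
    have hIic : (Set.Iic (F.max' hFne)).Countable := by
      rw [← Set.Iio_insert]
      exact Set.Countable.insert _ (hcount (F.max' hFne))
    exact hIic.mono fun β hβ => hb β hβ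
  -- every element of F is below β, and the weights there are bounded by m
  have hkey : ∀ α ∈ F, E β α < m := by
    intro α hα
    have hαβ : α < β := lt_of_le_of_lt (F.le_max' α hα) hβgt
    have h1 : (E β α : ℝ) + 1 ≤ cc (g α) * N' (B (g β)) := by
      have := hdom (g α) (B (g β))
      rwa [hNeval, hbigeval] at this
    have h2 : cc (g α) * N' (B (g β)) ≤ cc (g α) * (n : ℝ) :=
      mul_le_mul_of_nonneg_left hβJ (hcpos (g α)).le
    have h3 : cc (g α) * (n : ℝ) ≤ (m : ℝ) := hFsub hα
    have h4 : (E β α : ℝ) + 1 ≤ (m : ℝ) := by linarith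
    have h5 : E β α + 1 ≤ m := by exact_mod_cast h4
    omega
  -- pigeonhole
  have hcardle : F.card ≤ (Finset.range m).card := by
    refine Finset.card_le_card_of_injOn (fun α => E β α) ?_ ?_
    · intro α hα
      exact Finset.mem_range.mpr (hkey α hα)
    · intro α₁ hα₁ α₂ hα₂ hEq
      have h₁ : α₁ < β := lt_of_le_of_lt (F.le_max' α₁ hα₁) hβgt
      have h₂ : α₂ < β := lt_of_le_of_lt (F.le_max' α₂ hα₂) hβgt
      have : e β ⟨α₁, h₁⟩ = e β ⟨α₂, h₂⟩ := by
        simpa only [hEdef, dif_pos h₁, dif_pos h₂] using hEq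
      have := he β this
      exact congrArg Subtype.val this
  rw [hFcard, Finset.card_range] at hcardle
  omega
end

section
/- Let V be a real vector space, let O be a finite open subset of V, let F be a finite-dimensional linear subspace of V equipped with a norm N, and assume that O contains the closed unit ball {x ∈ F : N(x) ≤ 1} of (F, N). Let x ∈ V \ F and set F' := F ⊕ ℝ·x (the subspace spanned by F and x). Then N extends to a norm N' on F' whose closed unit ball {y ∈ F' : N'(y) ≤ 1} is contained in O. -/
lemma IsNorm.cont {m : ℕ} {M : (Fin m → ℝ) → ℝ} (hM : IsNorm M) :
    Continuous M := by
  obtain ⟨h0, hzero, hsmul, hadd⟩ := hM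
  have hM0 : M 0 = 0 := (hzero 0).mpr rfl
  have hneg : ∀ a, M (-a) = M a := by
    intro a
    have := hsmul (-1) a
    simpa using this
  have hsum : ∀ (s : Finset (Fin m)) (f : Fin m → (Fin m → ℝ)),
      M (∑ i ∈ s, f i) ≤ ∑ i ∈ s, M (f i) := by
    intro s f
    induction s using Finset.induction with
    | empty => simp [hM0]
    | @insert a s hnot ih =>
      rw [Finset.sum_insert hnot, Finset.sum_insert hnot]
      exact le_trans (hadd _ _) (add_le_add_right ih _)
  set C : ℝ := ∑ i, M (Pi.single i 1) with hC
  have hCnn : 0 ≤ C := Finset.sum_nonneg fun i _ => h0 _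
  have hbound : ∀ a, M a ≤ C * ‖a‖ := by
    intro a
    have hrep : a = ∑ i, (a i) • (Pi.single i (1 : ℝ) : Fin m → ℝ) := by
      funext j
      simp [Pi.single_apply, Finset.sum_apply, mul_ite]
    calc M a = M (∑ i, (a i) • (Pi.single i (1 : ℝ) : Fin m → ℝ)) := by rw [← hrep]
      _ ≤ ∑ i, M ((a i) • (Pi.single i (1 : ℝ) : Fin m → ℝ)) := hsum _ _
      _ = ∑ i, |a i| * M (Pi.single i (1 : ℝ) : Fin m → ℝ) := by simp [hsmul]
      _ ≤ ∑ i, ‖a‖ * M (Pi.single i (1 : ℝ) : Fin m → ℝ) := by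
          refine Finset.sum_le_sum fun i _ => ?_
          exact mul_le_mul_of_nonneg_right (by simpa using norm_le_pi_norm a i) (h0 _)
      _ = C * ‖a‖ := by rw [← Finset.mul_sum, mul_comm]
  have hlip : LipschitzWith C.toNNReal M := by
    refine LipschitzWith.of_dist_le_mul fun a b => ?_
    rw [Real.dist_eq, dist_eq_norm, Real.coe_toNNReal _ hCnn]
    rw [abs_sub_le_iff]
    constructor
    · have := hadd (a - b) b
      simp only [sub_add_cancel] at this
      have h2 := hbound (a - b)
      linarith
    · have := hadd (b - a) a
      simp only [sub_add_cancel] at this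
      have h3 : ‖b - a‖ = ‖a - b‖ := norm_sub_rev b a
      have h2 : M (b - a) ≤ C * ‖a - b‖ := by rw [← h3]; exact hbound (b - a)
      linarith
  exact hlip.continuous

lemma IsNorm.isCompact_ball {m : ℕ} {M : (Fin m → ℝ) → ℝ} (hM : IsNorm M) :
    IsCompact {c | M c ≤ 1} := by
  have hcont := hM.cont
  obtain ⟨h0, hzero, hsmul, hadd⟩ := hM
  rcases Nat.eq_zero_or_pos m with hm | hm
  · subst hm
    have hsub : ({c | M c ≤ 1} : Set (Fin 0 → ℝ)).Subsingleton :=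
      fun a _ b _ => Subsingleton.elim a b
    exact hsub.finite.isCompact
  · haveI : Nonempty (Fin m) := ⟨⟨0, hm⟩⟩
    haveI : Nontrivial (Fin m → ℝ) := inferInstance
    have hsne : (Metric.sphere (0 : Fin m → ℝ) 1).Nonempty :=
      NormedSpace.sphere_nonempty.mpr zero_le_one
    obtain ⟨c₁, hc₁, hmin⟩ := (isCompact_sphere (0 : Fin m → ℝ) 1).exists_isMinOn hsne
      hcont.continuousOn
    have hc₁norm : ‖c₁‖ = 1 := mem_sphere_zero_iff_norm.mp hc₁
    set α := M c₁ with hα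
    have hαpos : 0 < α := by
      rcases (h0 c₁).lt_or_eq with h | h
      · exact h
      · exfalso
        have : c₁ = 0 := (hzero c₁).mp h.symm
        rw [this] at hc₁norm; simp at hc₁norm
    have hbd : ∀ c, M c ≤ 1 → ‖c‖ ≤ α⁻¹ := by
      intro c hc
      by_cases h : c = 0
      · simp [h]; positivity
      · have hcn : (0:ℝ) < ‖c‖ := norm_pos_iff.mpr h
        have hu : (‖c‖⁻¹ • c) ∈ Metric.sphere (0 : Fin m → ℝ) 1 := by
          rw [mem_sphere_zero_iff_norm, norm_smul, norm_inv, norm_norm]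
          field_simp
        have hle : M c₁ ≤ M (‖c‖⁻¹ • c) := hmin hu
        rw [hsmul] at hle
        have habs : |‖c‖⁻¹| = ‖c‖⁻¹ := abs_of_pos (by positivity)
        rw [habs] at hle
        have this := hle
        -- α ≤ ‖c‖⁻¹ * M c
        have h1 : α * ‖c‖ ≤ M c := by
          have := mul_le_mul_of_nonneg_right this hcn.le
          rwa [mul_comm (‖c‖⁻¹) (M c), mul_assoc, inv_mul_cancel₀ hcn.ne', mul_one] at this
        have h2 : α * ‖c‖ ≤ 1 := h1.trans hc
        calc ‖c‖ = α⁻¹ * (α * ‖c‖) := by field_simp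
          _ ≤ α⁻¹ * 1 := by
              exact mul_le_mul_of_nonneg_left h2 (by positivity)
          _ = α⁻¹ := mul_one _
    refine IsCompact.of_isClosed_subset (isCompact_closedBall (0 : Fin m → ℝ) α⁻¹) ?_ ?_
    · exact isClosed_le hcont continuous_const
    · intro c hc
      rw [Metric.mem_closedBall, dist_zero_right]
      exact hbd c hc

/-- A norm on a finite-dimensional subspace whose closed unit ball is included in a
finite open set `O` extends, after adjoining one more vector `x`, to a norm on
`F ⊕ ℝx` whose closed unit ball is still included in `O`. -/
theorem stmt4 {V : Type*} [AddCommGroup V] [Module ℝ V]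
    (O : Set V) (hO : FiniteOpen O)
    (F : Submodule ℝ V) [FiniteDimensional ℝ F]
    (N : F → ℝ) (hN : IsNorm N)
    (hball : ∀ y : F, N y ≤ 1 → (y : V) ∈ O)
    (x : V) (hx : x ∉ F) :
    ∃ N' : (F ⊔ Submodule.span ℝ {x} : Submodule ℝ V) → ℝ,
      IsNorm N' ∧
      (∀ y : F, N' (Submodule.inclusion le_sup_left y) = N y) ∧
      ∀ z : (F ⊔ Submodule.span ℝ {x} : Submodule ℝ V), N' z ≤ 1 → (z : V) ∈ O := by
  classical
  obtain ⟨h0, heq, hsm, had⟩ := hN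
  set m := Module.finrank ℝ F with hm
  let e : Module.Basis (Fin m) ℝ F := Module.finBasis ℝ F
  let ψ : ((Fin m → ℝ) × ℝ) →ₗ[ℝ] V :=
    (F.subtype.comp e.equivFun.symm.toLinearMap).comp (LinearMap.fst ℝ (Fin m → ℝ) ℝ)
      + (LinearMap.toSpanSingleton ℝ V x).comp (LinearMap.snd ℝ (Fin m → ℝ) ℝ)
  have hψ : ∀ (c : Fin m → ℝ) (t : ℝ), ψ (c, t) = ((e.equivFun.symm c : F) : V) + t • x :=
    fun c t => rfl
  have hψinj : Function.Injective ψ := by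
    rw [← LinearMap.ker_eq_bot, LinearMap.ker_eq_bot']
    rintro ⟨c, t⟩ hp
    rw [hψ] at hp
    have ht : t = 0 := by
      by_contra ht
      apply hx
      have hxe : x = t⁻¹ • (-((e.equivFun.symm c : F) : V)) := by
        have : t • x = -((e.equivFun.symm c : F) : V) := eq_neg_of_add_eq_zero_right hp
        rw [← this, smul_smul, inv_mul_cancel₀ ht, one_smul]
      rw [hxe]
      exact F.smul_mem _ (F.neg_mem (e.equivFun.symm c).2)
    rw [ht, zero_smul, add_zero] at hp
    have hc0 : e.equivFun.symm c = 0 := Subtype.ext hp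
    have : c = 0 := by
      rwa [LinearEquiv.map_eq_zero_iff] at hc0
    rw [ht, this]; rfl
  have hrange : LinearMap.range ψ = F ⊔ Submodule.span ℝ {x} := by
    apply le_antisymm
    · rintro v ⟨⟨c, t⟩, rfl⟩
      rw [hψ]
      exact Submodule.add_mem _ (Submodule.mem_sup_left (e.equivFun.symm c).2)
        (Submodule.mem_sup_right (Submodule.smul_mem _ t (Submodule.mem_span_singleton_self x)))
    · refine sup_le ?_ ?_
      · intro v hv
        refine ⟨(e.equivFun ⟨v, hv⟩, 0), ?_⟩
        rw [hψ, e.equivFun.symm_apply_apply, zero_smul, add_zero]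
      · rw [Submodule.span_singleton_le_iff_mem]
        refine ⟨(0, 1), ?_⟩
        rw [hψ, map_zero, one_smul]
        simp
  let E : ((Fin m → ℝ) × ℝ) ≃ₗ[ℝ] (F ⊔ Submodule.span ℝ {x} : Submodule ℝ V) :=
    (LinearEquiv.ofInjective ψ hψinj).trans (LinearEquiv.ofEq _ _ hrange)
  have hEcoe : ∀ p, ((E p : (F ⊔ Submodule.span ℝ {x} : Submodule ℝ V)) : V) = ψ p := by
    intro p
    simp [E]
  have hcoeE : ∀ z : (F ⊔ Submodule.span ℝ {x} : Submodule ℝ V), (z : V) = ψ (E.symm z) := by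
    intro z
    conv_lhs => rw [← E.apply_symm_apply z]
    rw [hEcoe]
  -- the transported norm on ℝ^m
  set M : (Fin m → ℝ) → ℝ := fun c => N (e.equivFun.symm c) with hMdef
  have hMnorm : IsNorm M := by
    refine ⟨fun c => h0 _, fun c => ?_, fun a c => ?_, fun c d => ?_⟩
    · rw [hMdef]; dsimp only
      rw [heq, LinearEquiv.map_eq_zero_iff]
    · rw [hMdef]; dsimp only
      rw [map_smul, hsm]
    · rw [hMdef]; dsimp only
      rw [map_add]; exact had _ _
  -- openness of the preimage of O
  have hU : IsOpen (ψ ⁻¹' O) := by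
    let ι : (Fin (m + 1) → ℝ) →ₗ[ℝ] ((Fin m → ℝ) × ℝ) :=
      (LinearMap.funLeft ℝ ℝ Fin.castSucc).prod (LinearMap.proj (Fin.last m))
    have hι : ∀ f, ι f = (f ∘ Fin.castSucc, f (Fin.last m)) := fun f => rfl
    have hιsurj : Function.Surjective ι := by
      rintro ⟨c, t⟩
      refine ⟨Fin.snoc c t, ?_⟩
      rw [hι]
      ext i
      · simp [Fin.snoc_castSucc]
      · simp [Fin.snoc_last]
    have hιinj : Function.Injective ι := by
      intro f g h
      rw [hι, hι, Prod.mk.injEq] at h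
      funext i
      cases i using Fin.lastCases with
      | last => exact h.2
      | cast j => exact congrFun h.1 j
    let E2 := LinearEquiv.ofBijective ι ⟨hιinj, hιsurj⟩
    have h1 : IsOpen ((ψ.comp ι) ⁻¹' O) := hO (m + 1) (ψ.comp ι)
    have h2 : Continuous (⇑E2.symm : ((Fin m → ℝ) × ℝ) → (Fin (m + 1) → ℝ)) :=
      E2.symm.toLinearMap.continuous_of_finiteDimensional
    have hset : ψ ⁻¹' O = ⇑E2.symm ⁻¹' ((ψ.comp ι) ⁻¹' O) := by
      ext p
      have : ι (E2.symm p) = p := E2.apply_symm_apply p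
      simp [Set.mem_preimage, LinearMap.coe_comp, Function.comp_apply, this]
    rw [hset]
    exact h1.preimage h2
  -- compactness and thickening
  have hK : IsCompact (({c | M c ≤ 1} : Set (Fin m → ℝ)) ×ˢ ({0} : Set ℝ)) :=
    hMnorm.isCompact_ball.prod isCompact_singleton
  have hKU : (({c | M c ≤ 1} : Set (Fin m → ℝ)) ×ˢ ({0} : Set ℝ)) ⊆ ψ ⁻¹' O := by
    rintro ⟨c, t⟩ ⟨hc, ht⟩
    have ht0 : t = 0 := ht
    subst ht0
    show ψ (c, 0) ∈ O
    rw [hψ, zero_smul, add_zero]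
    exact hball _ hc
  obtain ⟨δ, hδpos, hδ⟩ := hK.exists_thickening_subset_open hU hKU
  set ε : ℝ := δ / 2 with hε
  have hεpos : 0 < ε := by positivity
  have hkey : ∀ (c : Fin m → ℝ) (t : ℝ), M c ≤ 1 → |t| ≤ ε → ψ (c, t) ∈ O := by
    intro c t hc ht
    apply hδ
    rw [Metric.mem_thickening_iff]
    refine ⟨(c, 0), ⟨hc, rfl⟩, ?_⟩
    rw [Prod.dist_eq]
    simp only [dist_self, Real.dist_eq, sub_zero]
    have : max 0 |t| = |t| := max_eq_right (abs_nonneg t)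
    rw [this]
    calc |t| ≤ ε := ht
      _ < δ := by rw [hε]; linarith
  -- the extended norm
  refine ⟨fun z => max (M (E.symm z).1) (ε⁻¹ * |(E.symm z).2|), ?_, ?_, ?_⟩
  · obtain ⟨hM0, hMeq, hMsm, hMad⟩ := hMnorm
    refine ⟨fun z => le_trans (hM0 _) (le_max_left _ _), fun z => ?_, fun a z => ?_, fun z w => ?_⟩
    · constructor
      · intro h
        have h1 : M (E.symm z).1 ≤ 0 := h ▸ le_max_left _ _
        have h2 : ε⁻¹ * |(E.symm z).2| ≤ 0 := h ▸ le_max_right _ _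
        have hc : (E.symm z).1 = 0 := (hMeq _).mp (le_antisymm h1 (hM0 _))
        have habs : |(E.symm z).2| = 0 := by
          have hεi : (0:ℝ) < ε⁻¹ := by positivity
          nlinarith [abs_nonneg (E.symm z).2]
        have ht : (E.symm z).2 = 0 := abs_eq_zero.mp habs
        have hz0 : E.symm z = 0 := Prod.ext hc ht
        rwa [LinearEquiv.map_eq_zero_iff] at hz0
      · rintro rfl
        simp only [map_zero, Prod.fst_zero, Prod.snd_zero, (hMeq 0).mpr rfl, abs_zero, mul_zero,
          max_self]
    · simp only [map_smul, Prod.smul_fst, Prod.smul_snd, hMsm]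
      have h2 : ε⁻¹ * |a • (E.symm z).2| = |a| * (ε⁻¹ * |(E.symm z).2|) := by
        rw [smul_eq_mul, abs_mul]; ring
      rw [h2, ← mul_max_of_nonneg _ _ (abs_nonneg a)]
    · simp only [map_add, Prod.fst_add, Prod.snd_add]
      refine max_le ?_ ?_
      · exact le_trans (hMad _ _) (add_le_add (le_max_left _ _) (le_max_left _ _))
      · have h1 : ε⁻¹ * |(E.symm z).2 + (E.symm w).2|
            ≤ ε⁻¹ * |(E.symm z).2| + ε⁻¹ * |(E.symm w).2| := by
          have := abs_add_le (E.symm z).2 (E.symm w).2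
          have hεi : (0:ℝ) ≤ ε⁻¹ := by positivity
          nlinarith
        exact le_trans h1 (add_le_add (le_max_right _ _) (le_max_right _ _))
  · intro y
    have hEy : E.symm (Submodule.inclusion le_sup_left y) = (e.equivFun y, 0) := by
      rw [LinearEquiv.symm_apply_eq]
      apply Subtype.ext
      rw [hEcoe, hψ, e.equivFun.symm_apply_apply, zero_smul, add_zero]
      simp
    simp only [hEy]
    simp only [hMdef, LinearEquiv.symm_apply_apply, abs_zero, mul_zero]
    exact max_eq_left (h0 y)
  · intro z hz
    have h1 : M (E.symm z).1 ≤ 1 := le_trans (le_max_left _ _) hz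
    have h2 : ε⁻¹ * |(E.symm z).2| ≤ 1 := le_trans (le_max_right _ _) hz
    have h3 : |(E.symm z).2| ≤ ε := by
      calc |(E.symm z).2| = ε * (ε⁻¹ * |(E.symm z).2|) := by field_simp
        _ ≤ ε * 1 := mul_le_mul_of_nonneg_left h2 hεpos.le
        _ = ε := mul_one _
    rw [hcoeE z]
    exact hkey _ _ h1 h3
end

section
/- Let V be a real vector space of countable dimension (Module.rank ℝ V ≤ ℵ₀), let O be a finite open subset of V, and let F be a finite-dimensional linear subspace of V equipped with a norm N such that O contains the closed unit ball {x ∈ F : N(x) ≤ 1} of (F, N). Then N extends to a norm N' on all of V whose closed unit ball {y ∈ V : N'(y) ≤ 1} is contained in O. -/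
section Aux

variable {V : Type*} [AddCommGroup V] [Module ℝ V]

lemma IsNorm.zero {N : V → ℝ} (hN : IsNorm N) : N 0 = 0 := (hN.2.1 0).2 rfl

lemma IsNorm.sum_le {N : V → ℝ} (hN : IsNorm N) {ι : Type*} (s : Finset ι) (g : ι → V) :
    N (∑ i ∈ s, g i) ≤ ∑ i ∈ s, N (g i) := by
  classical
  induction s using Finset.cons_induction with
  | empty => simp [hN.zero]
  | cons a s ha ih =>
      rw [Finset.sum_cons, Finset.sum_cons]
      exact (hN.2.2.2 _ _).trans (by linarith)

/-- Data of a partial extension of the norm: a finite-dimensional subspace `G` with a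
norm whose closed unit ball is inside `O`. -/
structure ExtNorm (O : Set V) : Type _ where
  G : Submodule ℝ V
  fin : FiniteDimensional ℝ G
  M : G → ℝ
  norm : IsNorm M
  ball : ∀ x : G, M x ≤ 1 → (x : V) ∈ O

/-- The thickening lemma: the closed unit ball of `D` can be thickened in direction `w`
while staying in `O`. -/
lemma ExtNorm.exists_eps {O : Set V} (hO : FiniteOpen O) (D : ExtNorm O) (w : V) :
    ∃ ε > 0, ∀ x : D.G, D.M x ≤ 1 → ∀ t : ℝ, |t| ≤ ε → (x : V) + t • w ∈ O := by
  classical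
  haveI := D.fin
  set G := D.G with hG
  set n := Module.finrank ℝ G with hn
  let b : Module.Basis (Fin n) ℝ G := Module.finBasis ℝ G
  let c : (Fin n → ℝ) ≃ₗ[ℝ] G := b.equivFun.symm
  let φ : ((Fin n → ℝ) × ℝ) →ₗ[ℝ] V :=
    (G.subtype ∘ₗ c.toLinearMap).coprod (LinearMap.toSpanSingleton ℝ V w)
  have hφ : ∀ p : (Fin n → ℝ) × ℝ, φ p = ((c p.1 : G) : V) + p.2 • w := by
    intro p; simp [φ, LinearMap.toSpanSingleton_apply]
  -- openness of φ ⁻¹' O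
  have hfr : Module.finrank ℝ ((Fin n → ℝ) × ℝ) = Module.finrank ℝ (Fin (n+1) → ℝ) := by
    simp [Module.finrank_prod]
  let E : ((Fin n → ℝ) × ℝ) ≃L[ℝ] (Fin (n+1) → ℝ) :=
    (LinearEquiv.ofFinrankEq _ _ hfr).toContinuousLinearEquiv
  have hopen : IsOpen (φ ⁻¹' O) := by
    have h1 : IsOpen ((φ ∘ₗ (E.symm : (Fin (n+1) → ℝ) →L[ℝ] ((Fin n → ℝ) × ℝ)).toLinearMap)
        ⁻¹' O) := hO (n+1) _
    have h2 : φ ⁻¹' O = E ⁻¹'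
        ((φ ∘ₗ (E.symm : (Fin (n+1) → ℝ) →L[ℝ] ((Fin n → ℝ) × ℝ)).toLinearMap) ⁻¹' O) := by
      ext p
      simp [E.symm_apply_apply]
    rw [h2]
    exact h1.preimage E.continuous
  -- the function f and its properties
  set f : (Fin n → ℝ) → ℝ := fun u => D.M (c u) with hf
  have hf0 : ∀ u, 0 ≤ f u := fun u => D.norm.1 _
  have hfsmul : ∀ (a : ℝ) u, f (a • u) = |a| * f u := by
    intro a u
    simp only [hf, map_smul]
    exact D.norm.2.2.1 a (c u)
  have hftri : ∀ u v, f (u + v) ≤ f u + f v := by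
    intro u v
    simp only [hf, map_add]
    exact D.norm.2.2.2 _ _
  obtain ⟨C, hC0, hCf⟩ : ∃ C ≥ 0, ∀ u, f u ≤ C * ‖u‖ := by
    refine ⟨∑ i, D.M (b i), Finset.sum_nonneg (fun i _ => D.norm.1 _), fun u => ?_⟩
    have hcu : c u = ∑ i, u i • b i := b.equivFun_symm_apply u
    calc D.M (c u) = D.M (∑ i, u i • b i) := by rw [hcu]
      _ ≤ ∑ i, D.M (u i • b i) := D.norm.sum_le _ _
      _ = ∑ i, |u i| * D.M (b i) := by simp [D.norm.2.2.1]
      _ ≤ ∑ i, ‖u‖ * D.M (b i) := by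
          refine Finset.sum_le_sum (fun i _ => mul_le_mul_of_nonneg_right ?_ (D.norm.1 _))
          simpa using norm_le_pi_norm u i
      _ = (∑ i, D.M (b i)) * ‖u‖ := by
          rw [Finset.sum_mul]
          exact Finset.sum_congr rfl (fun i _ => mul_comm _ _)
  have hfcont : Continuous f := by
    refine (LipschitzWith.of_dist_le_mul (K := Real.toNNReal C) (f := f) ?_).continuous
    intro u v
    rw [Real.dist_eq, dist_eq_norm, Real.coe_toNNReal C hC0]
    have hsub : ∀ p q : Fin n → ℝ, f p - f q ≤ f (p - q) := by
      intro p q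
      have := hftri (p - q) q
      simp only [sub_add_cancel] at this
      linarith
    have hneg : f (v - u) = f (u - v) := by
      have h : v - u = (-1 : ℝ) • (u - v) := by module
      rw [h, hfsmul]; norm_num
    rw [abs_sub_le_iff]
    constructor
    · exact (hsub u v).trans (hCf _)
    · refine (hsub v u).trans ?_
      rw [hneg, ← norm_sub_rev v u] at *
      exact (hCf _).trans_eq (by rw [norm_sub_rev])
  -- compactness of the unit ball K of f
  set K : Set (Fin n → ℝ) := f ⁻¹' Set.Iic 1 with hK
  have hKclosed : IsClosed K := isClosed_Iic.preimage hfcont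
  have hKbdd : Bornology.IsBounded K := by
    rcases subsingleton_or_nontrivial (Fin n → ℝ) with hs | hnt
    · exact (Bornology.isBounded_singleton (x := (0 : Fin n → ℝ))).subset
        (fun v _ => Subsingleton.elim v 0)
    · have hsph : IsCompact (Metric.sphere (0 : Fin n → ℝ) 1) := isCompact_sphere _ _
      have hne : (Metric.sphere (0 : Fin n → ℝ) 1).Nonempty :=
        NormedSpace.sphere_nonempty.2 zero_le_one
      obtain ⟨u₀, hu₀, hmin'⟩ := hsph.exists_isMinOn hne hfcont.continuousOn
      have hmin := isMinOn_iff.1 hmin'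
      have hm : 0 < f u₀ := by
        rcases (hf0 u₀).lt_or_eq with h | h
        · exact h
        · exfalso
          have : c u₀ = 0 := (D.norm.2.1 _).1 h.symm
          have hu0 : u₀ = 0 := by
            have := congrArg c.symm this
            simpa using this
          rw [Metric.mem_sphere, hu0] at hu₀
          simp at hu₀
      refine (Metric.isBounded_closedBall (x := (0 : Fin n → ℝ)) (r := (f u₀)⁻¹)).subset ?_
      intro v hv
      rw [Metric.mem_closedBall, dist_zero_right]
      by_cases hv0 : v = 0
      · simp [hv0]; positivity
      · have hnv : 0 < ‖v‖ := norm_pos_iff.2 hv0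
        have hle : f u₀ ≤ f (‖v‖⁻¹ • v) := by
          refine hmin _ ?_
          simp [Metric.mem_sphere, norm_smul, abs_of_pos (inv_pos.2 hnv),
            inv_mul_cancel₀ hnv.ne']
        rw [hfsmul, abs_of_pos (inv_pos.2 hnv)] at hle
        have hfv : f v ≤ 1 := hv
        have h1 : ‖v‖ * f u₀ ≤ f v := by
          have h2 := mul_le_mul_of_nonneg_left hle hnv.le
          rwa [mul_inv_cancel_left₀ hnv.ne'] at h2
        rw [← mul_le_mul_iff_of_pos_right hm, inv_mul_cancel₀ hm.ne']
        linarith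
  have hKcp : IsCompact K := Metric.isCompact_of_isClosed_isBounded hKclosed hKbdd
  have hScp : IsCompact (K ×ˢ ({0} : Set ℝ)) := hKcp.prod isCompact_singleton
  have hSsub : K ×ˢ ({0} : Set ℝ) ⊆ φ ⁻¹' O := by
    rintro ⟨u, t⟩ ⟨hu, ht⟩
    simp only [Set.mem_singleton_iff] at ht
    subst ht
    have : φ (u, 0) = ((c u : G) : V) := by simp [hφ]
    simp only [Set.mem_preimage, this]
    exact D.ball (c u) hu
  obtain ⟨δ, hδ, hth⟩ := hScp.exists_thickening_subset_open hopen hSsub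
  refine ⟨δ / 2, by positivity, ?_⟩
  intro x hx t ht
  have hcx : c (b.equivFun x) = x := b.equivFun.symm_apply_apply x
  have hx' : (b.equivFun x : Fin n → ℝ) ∈ K := by
    have hfx : f (b.equivFun x) = D.M x := by
      simp only [hf]
      rw [hcx]
    simp only [hK, Set.mem_preimage, Set.mem_Iic, hfx]
    exact hx
  have hmem : ((b.equivFun x : Fin n → ℝ), t) ∈ Metric.thickening δ (K ×ˢ ({0} : Set ℝ)) := by
    rw [Metric.mem_thickening_iff]
    refine ⟨(b.equivFun x, 0), ⟨hx', rfl⟩, ?_⟩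
    rw [Prod.dist_eq]
    simp only [dist_self, Real.dist_eq, sub_zero]
    have : |t| < δ := lt_of_le_of_lt ht (by linarith)
    simpa using this
  have := hth hmem
  have hφx : φ (b.equivFun x, t) = (x : V) + t • w := by
    rw [hφ]
    dsimp only
    rw [hcx]
  rwa [Set.mem_preimage, hφx] at this

end Aux
section Step

variable {V : Type*} [AddCommGroup V] [Module ℝ V]

lemma ExtNorm.step {O : Set V} (hO : FiniteOpen O) (D : ExtNorm O) (w : V) :
    ∃ D' : ExtNorm O, ∃ hle : D.G ≤ D'.G, w ∈ D'.G ∧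
      ∀ (z : V) (hz : z ∈ D.G) (hz' : z ∈ D'.G), D'.M ⟨z, hz'⟩ = D.M ⟨z, hz⟩ := by
  classical
  by_cases hw : w ∈ D.G
  · exact ⟨D, le_rfl, hw, fun z hz hz' => rfl⟩
  obtain ⟨ε, hε, hball⟩ := D.exists_eps hO w
  haveI := D.fin
  set G' : Submodule ℝ V := D.G ⊔ Submodule.span ℝ {w} with hG'
  haveI : FiniteDimensional ℝ G' := Submodule.finiteDimensional_sup _ _
  let φ : (D.G × ℝ) →ₗ[ℝ] V := (D.G.subtype).coprod (LinearMap.toSpanSingleton ℝ V w)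
  have hφ : ∀ p : D.G × ℝ, φ p = (p.1 : V) + p.2 • w := by
    intro p; simp [φ, LinearMap.toSpanSingleton_apply]
  have hinj : Function.Injective φ := by
    rw [← LinearMap.ker_eq_bot, LinearMap.ker_eq_bot']
    rintro ⟨x, t⟩ h
    rw [hφ] at h
    by_cases ht : t = 0
    · subst ht
      simp only [zero_smul, add_zero] at h
      have : x = 0 := Subtype.ext h
      simp [this]
    · exfalso
      apply hw
      have hwx : w = t⁻¹ • (-(x : V)) := by
        have h2 : t • w = -(x : V) := by linear_combination (norm := module) h
        rw [← h2, smul_smul, inv_mul_cancel₀ ht, one_smul]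
      rw [hwx]
      exact Submodule.smul_mem _ _ (Submodule.neg_mem _ x.2)
  have hrange : LinearMap.range φ = G' := by
    rw [hG', LinearMap.range_coprod, Submodule.range_subtype]
    congr 1
    exact (LinearMap.span_singleton_eq_range ℝ V w).symm
  let e : (D.G × ℝ) ≃ₗ[ℝ] G' :=
    (LinearEquiv.ofInjective φ hinj).trans (LinearEquiv.ofEq _ _ hrange)
  have hecoe : ∀ p : D.G × ℝ, ((e p : G') : V) = (p.1 : V) + p.2 • w := by
    intro p
    simp only [e, LinearEquiv.trans_apply, LinearEquiv.coe_ofEq_apply,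
      LinearEquiv.ofInjective_apply]
    exact hφ p
  let M' : G' → ℝ := fun g => max (D.M (e.symm g).1) (|(e.symm g).2| / ε)
  have hM'0 : ∀ g : G', 0 ≤ M' g := fun g => le_trans (D.norm.1 _) (le_max_left _ _)
  have habs0 : ∀ t : ℝ, 0 ≤ |t| / ε := fun t => div_nonneg (abs_nonneg t) hε.le
  have hnorm : IsNorm M' := by
    refine ⟨hM'0, ?_, ?_, ?_⟩
    · intro g
      constructor
      · intro h
        have h1 : D.M (e.symm g).1 = 0 := le_antisymm (h ▸ le_max_left _ _) (D.norm.1 _)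
        have h2 : |(e.symm g).2| / ε = 0 := le_antisymm (h ▸ le_max_right _ _) (habs0 _)
        have hx : (e.symm g).1 = 0 := (D.norm.2.1 _).1 h1
        have ht : (e.symm g).2 = 0 := by
          rw [div_eq_zero_iff] at h2
          rcases h2 with h2 | h2
          · exact abs_eq_zero.1 h2
          · exact absurd h2 hε.ne'
        have hz : e.symm g = 0 := Prod.ext hx ht
        calc g = e (e.symm g) := (e.apply_symm_apply g).symm
          _ = e 0 := by rw [hz]
          _ = 0 := map_zero e
      · rintro rfl
        have h0 : e.symm (0 : G') = 0 := map_zero e.symm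
        simp only [M', h0]
        simp [D.norm.zero]
    · intro a g
      have hs : e.symm (a • g) = a • e.symm g := map_smul e.symm a g
      simp only [M', hs, Prod.smul_fst, Prod.smul_snd]
      rw [D.norm.2.2.1]
      have habs : |a • (e.symm g).2| = |a| * |(e.symm g).2| := abs_mul a _
      rw [habs, mul_div_assoc]
      exact (mul_max_of_nonneg _ _ (abs_nonneg a)).symm
    · intro g g'
      have hs : e.symm (g + g') = e.symm g + e.symm g' := map_add e.symm g g'
      simp only [M', hs, Prod.fst_add, Prod.snd_add]
      refine max_le ?_ ?_
      · exact (D.norm.2.2.2 _ _).trans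
          (add_le_add (le_max_left _ _) (le_max_left _ _))
      · calc |(e.symm g).2 + (e.symm g').2| / ε
            ≤ (|(e.symm g).2| + |(e.symm g').2|) / ε := by
              gcongr
              exact abs_add_le _ _
          _ = |(e.symm g).2| / ε + |(e.symm g').2| / ε := add_div _ _ _
          _ ≤ _ := add_le_add (le_max_right _ _) (le_max_right _ _)
  have hball' : ∀ g : G', M' g ≤ 1 → (g : V) ∈ O := by
    intro g hg
    have hx : D.M (e.symm g).1 ≤ 1 := le_trans (le_max_left _ _) hg
    have ht : |(e.symm g).2| ≤ ε := by
      have h2 := le_trans (le_max_right _ _) hg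
      rwa [div_le_one hε] at h2
    have hgc : (g : V) = ((e.symm g).1 : V) + (e.symm g).2 • w := by
      conv_lhs => rw [← e.apply_symm_apply g]
      exact hecoe _
    rw [hgc]
    exact hball _ hx _ ht
  refine ⟨⟨G', inferInstance, M', hnorm, hball'⟩,
    le_sup_left, Submodule.mem_sup_right (Submodule.mem_span_singleton_self w), ?_⟩
  intro z hz hz'
  have he : e (⟨z, hz⟩, 0) = ⟨z, hz'⟩ := by
    apply Subtype.ext
    rw [hecoe]
    simp
  have hsymm : e.symm ⟨z, hz'⟩ = (⟨z, hz⟩, 0) := by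
    rw [← he, e.symm_apply_apply]
  show max (D.M (e.symm ⟨z, hz'⟩).1) (|(e.symm ⟨z, hz'⟩).2| / ε) = _
  rw [hsymm]
  simp only [abs_zero, zero_div]
  exact max_eq_left (D.norm.1 _)

end Step
/-- In a countable-dimensional space, a norm on a finite-dimensional subspace whose
closed unit ball is included in a finite open set `O` extends to a norm on the whole
space whose closed unit ball is still included in `O`. -/
theorem stmt5 {V : Type*} [AddCommGroup V] [Module ℝ V]
    (hV : Module.rank ℝ V ≤ Cardinal.aleph0)
    (O : Set V) (hO : FiniteOpen O)
    (F : Submodule ℝ V) [FiniteDimensional ℝ F]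
    (N : F → ℝ) (hN : IsNorm N)
    (hball : ∀ y : F, N y ≤ 1 → (y : V) ∈ O) :
    ∃ N' : V → ℝ, IsNorm N' ∧ (∀ y : F, N' y = N y) ∧
      ∀ z : V, N' z ≤ 1 → z ∈ O := by
  classical
  -- a spanning sequence
  obtain ⟨v, hv⟩ : ∃ v : ℕ → V, ⊤ ≤ Submodule.span ℝ (Set.range v) := by
    let ι := Module.Free.ChooseBasisIndex ℝ V
    let b : Module.Basis ι ℝ V := Module.Free.chooseBasis ℝ V
    haveI : Countable ι := by
      rw [← Cardinal.mk_le_aleph0_iff]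
      rw [← Module.Free.rank_eq_card_chooseBasisIndex ℝ V] at *
      exact hV
    rcases isEmpty_or_nonempty ι with h | h
    · refine ⟨fun _ => 0, ?_⟩
      have hb : Submodule.span ℝ (Set.range b) = ⊤ := b.span_eq
      rw [Set.range_eq_empty, Submodule.span_empty] at hb
      rw [← hb]
      exact bot_le
    · obtain ⟨g, hg⟩ := exists_surjective_nat ι
      refine ⟨b ∘ g, ?_⟩
      rw [Set.range_comp, hg.range_eq, Set.image_univ]
      exact b.span_eq.ge
  -- the chain of extensions
  have hstep := fun (D : ExtNorm O) (w : V) => D.step hO w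
  choose st hle hwmem hcompat using hstep
  let D : ℕ → ExtNorm O := fun n =>
    Nat.rec (⟨F, inferInstance, N, hN, hball⟩ : ExtNorm O) (fun n Dn => st Dn (v n)) n
  have hDs : ∀ n, D (n + 1) = st (D n) (v n) := fun n => rfl
  have hmono : Monotone (fun n => (D n).G) :=
    monotone_nat_of_le_succ (fun n => hle (D n) (v n))
  have hcomp : ∀ n m (h : n ≤ m) (z : V) (hz : z ∈ (D n).G) (hz' : z ∈ (D m).G),
      (D m).M ⟨z, hz'⟩ = (D n).M ⟨z, hz⟩ := by
    intro n m h
    induction m, h using Nat.le_induction with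
    | base => intro z hz hz'; rfl
    | succ m hnm ih =>
        intro z hz hz'
        have hzm : z ∈ (D m).G := hmono hnm hz
        have h2 : (st (D m) (v m)).M ⟨z, hz'⟩ = (D m).M ⟨z, hzm⟩ :=
          hcompat (D m) (v m) z hzm hz'
        exact h2.trans (ih z hz hzm)
  have hsup : ∀ z : V, ∃ n, z ∈ (D n).G := by
    intro z
    have hz : z ∈ ⨆ n, (D n).G := by
      have hspan : Submodule.span ℝ (Set.range v) ≤ ⨆ n, (D n).G := by
        rw [Submodule.span_le]
        rintro _ ⟨n, rfl⟩
        refine Submodule.mem_iSup_of_mem (n + 1) ?_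
        rw [hDs n]
        exact hwmem (D n) (v n)
      exact hspan (hv Submodule.mem_top)
    rwa [Submodule.mem_iSup_of_directed _ (hmono.directed_le)] at hz
  set N' : V → ℝ := fun z => (D (hsup z).choose).M ⟨z, (hsup z).choose_spec⟩ with hN'
  have hN'eq : ∀ (n : ℕ) (z : V) (hz : z ∈ (D n).G), N' z = (D n).M ⟨z, hz⟩ := by
    intro n z hz
    set m := (hsup z).choose with hm
    have hzm : z ∈ (D m).G := (hsup z).choose_spec
    have h1 : z ∈ (D (max n m)).G := hmono (le_max_left n m) hz
    have e1 := hcomp n (max n m) (le_max_left n m) z hz h1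
    have e2 := hcomp m (max n m) (le_max_right n m) z hzm h1
    simp only [hN']
    rw [← e2, e1]
  have hmem : ∀ (n : ℕ) (z : V), z ∈ (D n).G → ∀ (a : ℝ), a • z ∈ (D n).G :=
    fun n z hz a => Submodule.smul_mem _ a hz
  refine ⟨N', ⟨?_, ?_, ?_, ?_⟩, ?_, ?_⟩
  · intro z
    exact (D (hsup z).choose).norm.1 _
  · intro z
    obtain ⟨n, hz⟩ := hsup z
    rw [hN'eq n z hz, (D n).norm.2.1]
    constructor
    · intro h
      simpa using congrArg (Subtype.val) h
    · rintro rfl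
      exact Subtype.ext rfl
  · intro a z
    obtain ⟨n, hz⟩ := hsup z
    have haz : a • z ∈ (D n).G := Submodule.smul_mem _ a hz
    rw [hN'eq n z hz, hN'eq n (a • z) haz]
    have : (⟨a • z, haz⟩ : (D n).G) = a • (⟨z, hz⟩ : (D n).G) := Subtype.ext rfl
    rw [this, (D n).norm.2.2.1]
  · intro x y
    obtain ⟨nx, hx⟩ := hsup x
    obtain ⟨ny, hy⟩ := hsup y
    have hx' : x ∈ (D (max nx ny)).G := hmono (le_max_left _ _) hx
    have hy' : y ∈ (D (max nx ny)).G := hmono (le_max_right _ _) hy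
    have hxy : x + y ∈ (D (max nx ny)).G := Submodule.add_mem _ hx' hy'
    rw [hN'eq _ x hx', hN'eq _ y hy', hN'eq _ (x + y) hxy]
    have : (⟨x + y, hxy⟩ : (D (max nx ny)).G) =
        (⟨x, hx'⟩ : (D (max nx ny)).G) + ⟨y, hy'⟩ := Subtype.ext rfl
    rw [this]
    exact (D (max nx ny)).norm.2.2.2 _ _
  · intro y
    have h0 : (y : V) ∈ (D 0).G := y.2
    rw [hN'eq 0 (y : V) h0]
    rfl
  · intro z hz
    have := (D (hsup z).choose).ball ⟨z, (hsup z).choose_spec⟩ hz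
    exact this
end

section
/- There exists a function F : ω₁ × ω₁ → ℕ, where ω₁ denotes the set of countable ordinals (the first uncountable ordinal), such that for all functions G : ω₁ → ℕ and H : ω₁ → ℕ there is a pair (α, β) ∈ ω₁ × ω₁ with F(α, β) > max(G(α), H(β)). -/
open Cardinal in
open Ordinal in
/-- `𝒫(ω₁, ω₁)` fails: there is a function `F` on pairs of countable ordinals that is
dominated by no maximum `max (G α) (H β)` of functions of a single variable. -/
theorem stmt10 :
    ∃ F : {o : Ordinal.{0} // o < ω₁} → {o : Ordinal.{0} // o < ω₁} → ℕ,
      ∀ (G H : {o : Ordinal.{0} // o < ω₁} → ℕ),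
        ∃ α β, max (G α) (H β) < F α β := by
  set S := {o : Ordinal.{0} // o < ω₁} with hS
  have hω : ω₁ = (ℵ_ 1).ord := (ord_aleph 1).symm
  have hsucc : ∀ o : Ordinal.{0}, o < ω₁ → o + 1 < ω₁ := fun o ho =>
    hω ▸ (isSuccLimit_omega 1).succ_lt (hω ▸ ho)
  -- every initial segment is countable
  have hcnt : ∀ β : S, Countable {α : S // α.1 ≤ β.1} := by
    intro β
    have h1 : (β.1 + 1) < ω₁ := hsucc _ β.2
    have h2 : (Set.Iio (β.1 + 1)).Countable := by
      rw [Cardinal.countable_iff_lt_aleph_one, Cardinal.mk_Iio_ordinal, Cardinal.lift_lt_aleph_one]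
      exact Cardinal.lt_ord.mp (by rw [ord_aleph]; exact h1)
    have h3 : Countable (Set.Iio (β.1 + 1)) := h2.to_subtype
    exact Function.Injective.countable
      (f := fun α : {α : S // α.1 ≤ β.1} =>
        (⟨α.1.1, lt_of_le_of_lt α.2 (Order.lt_succ β.1)⟩ : Set.Iio (β.1 + 1)))
      (fun a b hab => by
        have h4 := congrArg (fun x : Set.Iio (β.1 + 1) => x.1) hab
        simp only at h4
        exact Subtype.ext (Subtype.ext h4))
  -- choose injections into ℕ
  have := fun β : S => @Countable.exists_injective_nat {α : S // α.1 ≤ β.1} (hcnt β)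
  choose e he using this
  refine ⟨fun α β => if h : β.1 ≤ α.1 then e α ⟨β, h⟩ else e β ⟨α, (not_le.mp h).le⟩, ?_⟩
  intro G H
  by_contra hc
  push_neg at hc
  -- S is not countable
  have hunc : ¬ Countable S := by
    intro hcS
    have : Nonempty S := ⟨⟨0, Ordinal.omega0_pos.trans omega0_lt_omega_one⟩⟩
    obtain ⟨f, hf⟩ := exists_surjective_nat S
    have hsup : (⨆ k : ℕ, ((f k).1 + 1)) < ω₁ := by
      have h5 := Ordinal.iSup_lt_omega_one (f := fun k : ℕ => ((f k).1 + 1))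
        (fun k => hsucc _ (f k).2)
      exact h5
    obtain ⟨k, hk⟩ := hf ⟨_, hsup⟩
    have h1 := Ordinal.le_iSup (fun k : ℕ => ((f k).1 + 1)) k
    rw [hk] at h1
    exact (Order.lt_succ (α := Ordinal) _).not_ge h1
  -- some fiber of G is infinite
  have hfib : ∃ n, (G ⁻¹' {n}).Infinite := by
    by_contra hf
    push_neg at hf
    have hu : (Set.univ : Set S).Countable := by
      have h0 : (Set.univ : Set S) = ⋃ n, G ⁻¹' {n} := by ext x; simp
      rw [h0]
      exact Set.countable_iUnion fun n => (hf n).countable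
    exact hunc (Set.countable_univ_iff.mp hu)
  obtain ⟨n, hA⟩ := hfib
  set g := hA.natEmbedding with hg
  have hβ0 : (⨆ k : ℕ, ((g k).1.1 + 1)) < ω₁ := by
    have h5 := Ordinal.iSup_lt_omega_one (f := fun k : ℕ => ((g k).1.1 + 1))
      (fun k => hsucc _ (g k).1.2)
    exact h5
  set β : S := ⟨_, hβ0⟩ with hβ
  have hlt : ∀ k : ℕ, (g k).1.1 < β.1 := fun k =>
    (Order.lt_succ (α := Ordinal) _).trans_le (Ordinal.le_iSup (fun k : ℕ => ((g k).1.1 + 1)) k)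
  set m := max n (H β) with hm
  have hbound : ∀ k : ℕ, e β ⟨(g k).1, (hlt k).le⟩ ≤ m := by
    intro k
    have h1 := hc (g k).1 β
    have h2 : G (g k).1 = n := (g k).2
    rw [dif_neg (not_le.mpr (hlt k))] at h1
    rw [h2] at h1
    exact h1
  have hinj : Function.Injective (fun k : ℕ => (⟨e β ⟨(g k).1, (hlt k).le⟩,
      Nat.lt_succ_of_le (hbound k)⟩ : Fin (m + 1))) := by
    intro j k hjk
    simp only [Fin.mk.injEq] at hjk
    have h6 := he β hjk
    have h2 : (g j).1 = (g k).1 := congrArg (fun x : {α : S // α.1 ≤ β.1} => x.1) h6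
    exact g.injective (Subtype.ext h2)
  obtain ⟨j, k, hjk, heq⟩ := Finite.exists_ne_map_eq_of_infinite
    (fun k : ℕ => (⟨e β ⟨(g k).1, (hlt k).le⟩, Nat.lt_succ_of_le (hbound k)⟩ : Fin (m + 1)))
  exact hjk (hinj heq)
end

section
/- (Hathaway) Let X and Y be sets. Then every function f : X × Y → ℕ is separably dominated if and only if one of the following holds: (i) X or Y is finite; (ii) one of X, Y is countable and the other has cardinality strictly less than the bounding number 𝔟. -/
universe u v

/-- The bounding number `𝔟`: the least cardinality of a subset of `ℕ → ℕ` that is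
unbounded for eventual domination. -/
noncomputable def boundingNumber : Cardinal.{0} :=
  sInf {c : Cardinal.{0} | ∃ X : Set (ℕ → ℕ), Cardinal.mk X = c ∧
    ¬ ∃ g : ℕ → ℕ, ∀ f ∈ X, ∃ n : ℕ, ∀ k ≥ n, f k ≤ g k}

open Cardinal

section Aux

/-- Every `f : X × Y → ℕ` is separably dominated. -/
def SepDom (X : Type*) (Y : Type*) : Prop :=
  ∀ f : X × Y → ℕ, ∃ (G : X → ℕ) (H : Y → ℕ),
    ∀ (x : X) (y : Y), f (x, y) ≤ max (G x) (H y)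

lemma sepDom_symm {X : Type*} {Y : Type*} (h : SepDom X Y) : SepDom Y X := by
  intro f
  obtain ⟨G, H, hGH⟩ := h (fun p => f (p.2, p.1))
  exact ⟨H, G, fun y x => by simpa [max_comm] using hGH x y⟩

lemma sepDom_of_emb {A X B Y : Type*} [Nonempty A] [Nonempty B]
    (i : A ↪ X) (j : B ↪ Y) (h : SepDom X Y) : SepDom A B := by
  classical
  intro f
  obtain ⟨G, H, hGH⟩ := h (fun p => f (Function.invFun i p.1, Function.invFun j p.2))
  refine ⟨fun a => G (i a), fun b => H (j b), fun a b => ?_⟩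
  have := hGH (i a) (j b)
  rwa [Function.leftInverse_invFun i.injective a,
    Function.leftInverse_invFun j.injective b] at this

lemma sepDom_of_finite_left {X : Type*} {Y : Type*} [Finite X] : SepDom X Y := by
  intro f
  have := Fintype.ofFinite X
  refine ⟨fun _ => 0, fun y => Finset.univ.sup (fun x => f (x, y)), fun x y =>
    le_max_of_le_right ?_⟩
  exact Finset.le_sup (f := fun x => f (x, y)) (Finset.mem_univ x)

/-- The defining set of the bounding number. -/
def BSet : Set Cardinal.{0} :=
  {c : Cardinal.{0} | ∃ X : Set (ℕ → ℕ), Cardinal.mk X = c ∧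
    ¬ ∃ g : ℕ → ℕ, ∀ f ∈ X, ∃ n : ℕ, ∀ k ≥ n, f k ≤ g k}

lemma boundingNumber_eq : boundingNumber = sInf BSet := rfl

lemma BSet_nonempty : BSet.Nonempty := by
  refine ⟨Cardinal.mk (Set.univ : Set (ℕ → ℕ)), Set.univ, rfl, ?_⟩
  rintro ⟨g, hg⟩
  obtain ⟨n, hn⟩ := hg (fun k => g k + 1) (Set.mem_univ _)
  exact absurd (hn n le_rfl) (by omega)

lemma boundingNumber_mem : boundingNumber ∈ BSet :=
  boundingNumber_eq ▸ csInf_mem BSet_nonempty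

lemma bounded_of_lt_boundingNumber (S : Set (ℕ → ℕ)) (h : Cardinal.mk S < boundingNumber) :
    ∃ g : ℕ → ℕ, ∀ f ∈ S, ∃ n : ℕ, ∀ k ≥ n, f k ≤ g k := by
  by_contra hc
  have hle : boundingNumber ≤ Cardinal.mk S := by
    rw [boundingNumber_eq]
    exact csInf_le' (show Cardinal.mk S ∈ BSet from ⟨S, rfl, hc⟩)
  exact absurd hle (not_le.mpr h)

lemma sepDom_of_countable {X : Type u} {Y : Type v} [Countable X]
    (hY : Cardinal.mk Y < Cardinal.lift.{v} boundingNumber) : SepDom X Y := by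
  classical
  cases finite_or_infinite X with
  | inl hfin => exact sepDom_of_finite_left
  | inr hinf =>
    obtain ⟨d⟩ := nonempty_denumerable X
    let e : X ≃ ℕ := Denumerable.eqv X
    intro f
    set F : Y → (ℕ → ℕ) := fun y n => f (e.symm n, y) with hF
    have hS : Cardinal.mk (Set.range F) < boundingNumber := by
      have h1 : Cardinal.lift.{v} (Cardinal.mk (Set.range F)) ≤ Cardinal.lift.{0} (Cardinal.mk Y) :=
        Cardinal.mk_range_le_lift
      rw [Cardinal.lift_uzero] at h1
      exact Cardinal.lift_lt.mp (lt_of_le_of_lt h1 hY)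
    obtain ⟨g, hg⟩ := bounded_of_lt_boundingNumber _ hS
    have hN : ∀ y : Y, ∃ n : ℕ, ∀ k ≥ n, F y k ≤ g k := fun y => hg (F y) ⟨y, rfl⟩
    choose N hNs using hN
    refine ⟨fun x => g (e x), fun y => (Finset.range (N y)).sup (F y), fun x y => ?_⟩
    have hfx : f (x, y) = F y (e x) := by simp [hF]
    rcases le_or_gt (N y) (e x) with h1 | h1
    · exact hfx ▸ le_max_of_le_left (hNs y (e x) h1)
    · exact hfx ▸ le_max_of_le_right (Finset.le_sup (Finset.mem_range.mpr h1))

lemma not_sepDom_nat_unbounded (S : Set (ℕ → ℕ))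
    (hS : ¬ ∃ g : ℕ → ℕ, ∀ f ∈ S, ∃ n : ℕ, ∀ k ≥ n, f k ≤ g k) :
    ¬ SepDom ℕ S := by
  intro h
  obtain ⟨G, H, hGH⟩ := h (fun p => (p.2 : ℕ → ℕ) p.1)
  apply hS
  refine ⟨fun k => G k + k, fun f hf => ⟨H ⟨f, hf⟩, fun k hk => ?_⟩⟩
  have h1 := hGH k ⟨f, hf⟩
  simp only [ge_iff_le] at hk
  have : max (G k) (H ⟨f, hf⟩) ≤ G k + k := max_le (by omega) (by omega)
  exact le_trans h1 this

/-- `ω₁` as a type. -/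
noncomputable abbrev W : Type := (Cardinal.aleph 1).ord.ToType

lemma mk_W : Cardinal.mk W = Cardinal.aleph 1 :=
  Cardinal.mk_ord_toType _

instance : IsWellOrder W (· < ·) := isWellOrder_lt

instance : Nonempty W := by
  rw [← Cardinal.mk_ne_zero_iff, mk_W]
  exact ne_of_gt (lt_trans Cardinal.aleph0_pos Cardinal.aleph0_lt_aleph_one)

lemma not_countable_W : ¬ Countable W := by
  rw [← Cardinal.mk_le_aleph0_iff, mk_W]
  exact not_le.mpr Cardinal.aleph0_lt_aleph_one

lemma countable_Iio_W (w : W) : Countable {v : W // v < w} := by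
  rw [← Cardinal.mk_le_aleph0_iff]
  have h1 : Cardinal.mk {v : W // v < w} = (Ordinal.typein ((· < ·) : W → W → Prop) w).card :=
    Ordinal.card_typein (r := ((· < ·) : W → W → Prop)) w
  have h2 : Ordinal.typein ((· < ·) : W → W → Prop) w < (Cardinal.aleph 1).ord := by
    have := Ordinal.typein_lt_type ((· < ·) : W → W → Prop) w
    rwa [Ordinal.type_toType] at this
  have h3 : (Ordinal.typein ((· < ·) : W → W → Prop) w).card < Cardinal.aleph 1 :=
    Cardinal.lt_ord.mp h2
  rw [h1]
  have h4 : (Ordinal.typein ((· < ·) : W → W → Prop) w).card < Order.succ Cardinal.aleph0 := by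
    rw [Cardinal.succ_aleph0]
    exact h3
  exact Order.lt_succ_iff.mp h4

lemma not_sepDom_W : ¬ SepDom W W := by
  classical
  intro h
  -- choose injections from initial segments into ℕ
  have hemb : ∀ w : W, Nonempty ({v : W // v < w} ↪ ℕ) := fun w => by
    have := countable_Iio_W w
    exact countable_iff_nonempty_embedding.mp this
  let e : ∀ w : W, {v : W // v < w} ↪ ℕ := fun w => Classical.choice (hemb w)
  set f : W × W → ℕ := fun p => if hv : p.1 < p.2 then e p.2 ⟨p.1, hv⟩ else 0 with hf
  obtain ⟨G, H, hGH⟩ := h f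
  -- some fiber of G is uncountable
  have hfib : ∃ m : ℕ, ¬ (G ⁻¹' {m}).Countable := by
    by_contra hc
    push_neg at hc
    have huniv : (Set.univ : Set W).Countable := by
      have : (Set.univ : Set W) = ⋃ m, G ⁻¹' {m} := by
        ext w; simp
      rw [this]
      exact Set.countable_iUnion hc
    exact not_countable_W (Set.countable_univ_iff.mp huniv)
  obtain ⟨m, hA⟩ := hfib
  set A : Set W := G ⁻¹' {m} with hAdef
  -- there exists w with infinitely many elements of A below it
  have hw : ∃ w : W, {a ∈ A | a < w}.Infinite := by
    by_contra hc
    push_neg at hc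
    apply hA
    rw [Set.countable_iff_exists_injOn]
    refine ⟨fun a => ({a' ∈ A | a' < a}).ncard, ?_⟩
    intro a ha b hb hab
    by_contra hne
    rcases lt_or_gt_of_ne hne with hlt | hlt
    · have hss : {a' ∈ A | a' < a} ⊂ {a' ∈ A | a' < b} := by
        constructor
        · intro x hx; exact ⟨hx.1, lt_trans hx.2 hlt⟩
        · intro hsub
          have := hsub ⟨ha, hlt⟩
          exact absurd this.2 (lt_irrefl a)
      have h2 := Set.ncard_lt_ncard hss (hc b)
      have hab' : {a' ∈ A | a' < a}.ncard = {a' ∈ A | a' < b}.ncard := hab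
      omega
    · have hss : {a' ∈ A | a' < b} ⊂ {a' ∈ A | a' < a} := by
        constructor
        · intro x hx; exact ⟨hx.1, lt_trans hx.2 hlt⟩
        · intro hsub
          have := hsub ⟨hb, hlt⟩
          exact absurd this.2 (lt_irrefl b)
      have h2 := Set.ncard_lt_ncard hss (hc a)
      have hab' : {a' ∈ A | a' < a}.ncard = {a' ∈ A | a' < b}.ncard := hab
      omega
  obtain ⟨w, hinf⟩ := hw
  set B : Set W := {a ∈ A | a < w} with hBdef
  set c : ℕ := max m (H w) with hc
  -- B maps injectively into Iic c, so it is finite: contradiction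
  set φ : W → ℕ := fun a => if h : a < w then e w ⟨a, h⟩ else 0 with hφ
  have hinj : Set.InjOn φ B := by
    intro a ha b hb hab
    simp only [hφ, dif_pos ha.2, dif_pos hb.2] at hab
    exact congrArg Subtype.val ((e w).injective hab)
  have himg : φ '' B ⊆ Set.Iic c := by
    rintro _ ⟨a, ha, rfl⟩
    have h1 : φ a = f (a, w) := by simp [hφ, hf, ha.2]
    have h2 : f (a, w) ≤ max (G a) (H w) := hGH a w
    have h3 : G a = m := ha.1
    rw [h1]
    rw [h3] at h2
    exact h2
  have hfin : B.Finite :=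
    Set.Finite.of_finite_image (Set.Finite.subset (Set.finite_Iic c) himg) hinj
  exact hinf hfin

lemma unbounded_nonempty (S : Set (ℕ → ℕ))
    (hS : ¬ ∃ g : ℕ → ℕ, ∀ f ∈ S, ∃ n : ℕ, ∀ k ≥ n, f k ≤ g k) : Nonempty S := by
  rcases Set.eq_empty_or_nonempty S with he | hne
  · exfalso; apply hS; exact ⟨id, fun f hf => by simp [he] at hf⟩
  · exact hne.to_subtype

lemma aleph_one_le_of_not_countable {X : Type u} (h : ¬ Countable X) :
    Cardinal.aleph 1 ≤ Cardinal.mk X := by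
  have h0 : Cardinal.aleph0 < Cardinal.mk X := by
    rw [← not_le, Cardinal.mk_le_aleph0_iff]; exact h
  have := Order.succ_le_of_lt h0
  rwa [Cardinal.succ_aleph0] at this

lemma W_emb_of_not_countable {X : Type u} (h : ¬ Countable X) : Nonempty (W ↪ X) := by
  rw [← Cardinal.lift_mk_le']
  rw [mk_W, Cardinal.lift_uzero]
  have h1 : Cardinal.lift.{u} (Cardinal.aleph 1) = Cardinal.aleph 1 := by
    rw [Cardinal.lift_aleph]; simp
  rw [h1]
  exact aleph_one_le_of_not_countable h

end Aux

/-- Hathaway's theorem: every `f : X × Y → ℕ` is separably dominated iff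
`X` or `Y` is finite, or one of them is countable and the other has cardinality
less than the bounding number `𝔟`. -/
theorem stmt11 {X : Type u} {Y : Type v} :
    (∀ f : X × Y → ℕ, ∃ (G : X → ℕ) (H : Y → ℕ),
        ∀ (x : X) (y : Y), f (x, y) ≤ max (G x) (H y)) ↔
      (Finite X ∨ Finite Y ∨
        (Countable X ∧ Cardinal.mk Y < Cardinal.lift.{v} boundingNumber) ∨
        (Countable Y ∧ Cardinal.mk X < Cardinal.lift.{u} boundingNumber)) := by
  constructor
  · intro h
    by_contra hR
    push_neg at hR
    obtain ⟨hXf, hYf, hXc, hYc⟩ := hR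
    have hX : Infinite X := hXf
    have hY : Infinite Y := hYf
    obtain ⟨S, hSmk, hSunb⟩ := boundingNumber_mem
    have hSne : Nonempty S := unbounded_nonempty S hSunb
    by_cases hcX : Countable X
    · -- X countable infinite, lift b ≤ #Y, embed S into Y
      have hYb : Cardinal.lift.{v} boundingNumber ≤ Cardinal.mk Y := hXc hcX
      have hj : Nonempty (↥S ↪ Y) := by
        rw [← Cardinal.lift_mk_le', Cardinal.lift_uzero, hSmk]
        exact hYb
      obtain ⟨j⟩ := hj
      exact not_sepDom_nat_unbounded S hSunb
        (sepDom_of_emb (Infinite.natEmbedding X) j h)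
    · by_cases hcY : Countable Y
      · have hXb : Cardinal.lift.{u} boundingNumber ≤ Cardinal.mk X := hYc hcY
        have hj : Nonempty (↥S ↪ X) := by
          rw [← Cardinal.lift_mk_le', Cardinal.lift_uzero, hSmk]
          exact hXb
        obtain ⟨j⟩ := hj
        exact not_sepDom_nat_unbounded S hSunb
          (sepDom_of_emb (Infinite.natEmbedding Y) j (sepDom_symm h))
      · -- both uncountable
        obtain ⟨i⟩ := W_emb_of_not_countable hcX
        obtain ⟨j⟩ := W_emb_of_not_countable hcY
        exact not_sepDom_W (sepDom_of_emb i j h)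
  · rintro (hXf | hYf | ⟨hc, hlt⟩ | ⟨hc, hlt⟩)
    · exact sepDom_of_finite_left
    · exact sepDom_symm sepDom_of_finite_left
    · exact sepDom_of_countable hlt
    · exact sepDom_symm (sepDom_of_countable hlt)
end

section
/- Let V be a real vector space with basis (e_k)_{k ∈ κ}, let N' be the supremum norm associated to this basis, and let (N_k)_{k ∈ κ} be norms on V with N' ≤ N_k pointwise for every k. For each k define B_k := {x ∈ V : N_k(x − e_k) < 1/3}, and set O := ⋃_{k ∈ κ} B_k. If N is a norm on V such that O is open in the topology induced by N, then N dominates every N_k: for each k ∈ κ there is a positive real c_k with N_k ≤ c_k · N pointwise. -/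
/-- Given a basis `(e_k)` of `V` and norms `N_k` each dominating the associated
supremum norm, set `B_k := {x | N_k(x - e_k) < 1/3}` and `O := ⋃ k, B_k`. Any norm
`N` for which `O` is open dominates every `N_k`. -/
theorem stmt16 {V : Type*} [AddCommGroup V] [Module ℝ V] {κ : Type*}
    (b : Module.Basis κ ℝ V) (N : κ → V → ℝ) (hN : ∀ k, IsNorm (N k))
    (hle : ∀ (k : κ) (x : V), (⨆ j, |b.repr x j|) ≤ N k x)
    (M : V → ℝ) (hM : IsNorm M)
    (hopen : NormOpen M (⋃ k, {x : V | N k (x - b k) < 1/3})) :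
    ∀ k, ∃ c : ℝ, 0 < c ∧ ∀ x, N k x ≤ c * M x := by
  intro k
  obtain ⟨hM0, hMeq, hMsmul, hMadd⟩ := hM
  -- boundedness of the coordinate family
  have hbdd : ∀ y : V, BddAbove (Set.range fun j => |b.repr y j|) := by
    intro y
    have hsub : (Set.range fun j => |b.repr y j|) ⊆
        ↑(insert (0:ℝ) (((b.repr y).support).image fun j => |b.repr y j|)) := by
      rintro r ⟨j, rfl⟩
      simp only [Finset.coe_insert, Set.mem_insert_iff, Finset.coe_image, Set.mem_image]
      by_cases h : b.repr y j = 0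
      · left; simp [h]
      · right; exact ⟨j, Finsupp.mem_support_iff.2 h, rfl⟩
    exact (Finset.bddAbove _).mono hsub
  have hcoord : ∀ (j : κ) (y : V) (i : κ), |b.repr y i| ≤ N j y := by
    intro j y i
    exact le_trans (le_ciSup (hbdd y) i) (hle j y)
  -- e_k ∈ O
  obtain ⟨hN0, hNeq, hNsmul, hNadd⟩ := hN k
  have hmem : b k ∈ ⋃ j, {x : V | N j (x - b j) < 1/3} := by
    refine Set.mem_iUnion.2 ⟨k, ?_⟩
    simp only [Set.mem_setOf_eq, sub_self]
    have : N k (0 : V) = 0 := (hNeq 0).2 rfl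
    rw [this]; norm_num
  obtain ⟨ε, hε, hball⟩ := hopen _ hmem
  refine ⟨2 / (3 * ε), by positivity, ?_⟩
  intro x
  by_cases hx : x = 0
  · subst hx
    have h1 : N k (0 : V) = 0 := (hNeq 0).2 rfl
    have h2 : M (0 : V) = 0 := (hMeq 0).2 rfl
    rw [h1, h2]; simp
  have hMx : 0 < M x := lt_of_le_of_ne (hM0 x) (fun h => hx ((hMeq x).1 h.symm))
  -- main lemma: for suitable t, y = b k + t • x lands in B_k
  have key : ∀ t : ℝ, 0 < t → t * M x < ε → |t * b.repr x k| ≤ 2/3 →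
      t * N k x < 1/3 := by
    intro t ht htM htc
    have hy : N k (b k + t • x - b k) < 1/3 ∨ False := by
      have hmemO : b k + t • x ∈ ⋃ j, {z : V | N j (z - b j) < 1/3} := by
        apply hball
        have : b k + t • x - b k = t • x := by abel
        rw [this, hMsmul, abs_of_pos ht]
        exact htM
      obtain ⟨j, hj⟩ := Set.mem_iUnion.1 hmemO
      simp only [Set.mem_setOf_eq] at hj
      by_cases hjk : j = k
      · subst hjk; exact Or.inl hj
      · -- contradiction: k-th coordinate of (b k + t • x - b j) is 1 + t * x_k
        exfalso
        have hco := hcoord j (b k + t • x - b j) k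
        have hrepr : b.repr (b k + t • x - b j) k = 1 + t * b.repr x k := by
          simp [map_add, map_sub, Module.Basis.repr_self, Finsupp.single_apply, hjk,
            Ne.symm hjk]
        rw [hrepr] at hco
        have hlt : |1 + t * b.repr x k| < 1/3 := lt_of_le_of_lt hco hj
        have : (1:ℝ) - 2/3 ≤ |1 + t * b.repr x k| := by
          have h1 : |(1:ℝ)| - |t * b.repr x k| ≤ |1 + t * b.repr x k| := by
            have := abs_sub_abs_le_abs_sub (1 : ℝ) (-(t * b.repr x k))
            simpa [sub_neg_eq_add] using this
          have h2 : |(1:ℝ)| = 1 := abs_one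
          linarith
        linarith
    rcases hy with hy | hy
    · have : b k + t • x - b k = t • x := by abel
      rw [this, hNsmul, abs_of_pos ht] at hy
      exact hy
    · exact hy.elim
  -- Case split on the size of |x_k|
  rcases le_or_gt (ε * |b.repr x k|) (4/3 * M x) with hca | hcb
  · -- use t = ε / (2 * M x)
    set t := ε / (2 * M x) with ht_def
    have ht : 0 < t := by positivity
    have htM : t * M x < ε := by
      have h2 : t * M x = ε / 2 := by
        rw [ht_def]; field_simp
      rw [h2]; linarith
    have htc : |t * b.repr x k| ≤ 2/3 := by
      rw [abs_mul, abs_of_pos ht]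
      have : t * |b.repr x k| = (ε * |b.repr x k|) / (2 * M x) := by
        rw [ht_def]; ring
      rw [this]
      rw [div_le_iff₀ (by positivity)]
      linarith
    have := key t ht htM htc
    have h13 : N k x < 1 / (3 * t) := by
      rw [lt_div_iff₀ (by positivity)]
      linarith [mul_comm t (N k x)]
    have heq : 1 / (3 * t) = 2 / (3 * ε) * M x := by
      rw [ht_def]
      field_simp
    linarith
  · -- contradiction case: |x_k| large
    exfalso
    have hxk : 0 < |b.repr x k| := by
      by_contra h
      push_neg at h
      have : |b.repr x k| = 0 := le_antisymm h (abs_nonneg _)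
      rw [this] at hcb
      simp at hcb
      linarith
    set t := 2 / (3 * |b.repr x k|) with ht_def
    have ht : 0 < t := by positivity
    have htM : t * M x < ε := by
      rw [ht_def, div_mul_eq_mul_div, div_lt_iff₀ (by positivity)]
      nlinarith
    have htc : |t * b.repr x k| ≤ 2/3 := by
      rw [abs_mul, abs_of_pos ht, ht_def]
      rw [div_mul_eq_mul_div, div_le_iff₀ (by positivity)]
      ring_nf
      nlinarith
    have hkey := key t ht htM htc
    have hNx : |b.repr x k| ≤ N k x := hcoord k x k
    -- t * N k x < 1/3 means N k x < |x_k|/2 ≤ N k x / 2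
    have : N k x < |b.repr x k| / 2 := by
      have h1 : t * N k x < 1/3 := hkey
      rw [ht_def] at h1
      rw [div_mul_eq_mul_div, div_lt_iff₀ (by positivity)] at h1
      linarith
    linarith
end
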